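/- arXiv:1711.08025 — 6 statements merged into one kernel-verified Lean document; each statement's English description precedes it below -/
import Mathlib

section
/- The periodic infinite word (012)^ω over three letters avoids the formula with reversal xy · ȳx̄: there is no pair of nonempty words U, V such that both UV and reverse(V)·reverse(U) are factors of (012)^ω. -/
def IsFactorOf {α : Type*} (u : List α) (w : ℕ → α) : Prop :=
  ∃ i : ℕ, u = (List.range u.length).map fun k => w (i + k)

/-- (012)^ω avoids the formula with reversal xy · ȳx̄. -/
theorem periodic012_avoids_xy_ybarxbar :
    ¬ ∃ U V : List ℕ, U ≠ [] ∧ V ≠ [] ∧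
      IsFactorOf (U ++ V) (fun n => n % 3) ∧
      IsFactorOf (V.reverse ++ U.reverse) (fun n => n % 3) := by
  rintro ⟨U, V, hU, hV, ⟨i, hi⟩, ⟨j, hj⟩⟩
  set L := U ++ V with hL
  have hn : 2 ≤ L.length := by
    have h1 := List.length_pos_iff.mpr hU
    have h2 := List.length_pos_iff.mpr hV
    simp only [hL, List.length_append]; omega
  have hrev : L.reverse = (List.range L.length).map fun k => (j + k) % 3 := by
    rw [hL, List.reverse_append, hj]
    congr 2
    simp only [List.length_append, List.length_reverse]
    omega
  -- elements of L
  have hLe : ∀ k (hk : k < L.length), L[k] = (i + k) % 3 := by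
    intro k hk
    rw [List.getElem_of_eq hi]
    simp
  have hRe : ∀ k (hk : k < L.reverse.length), L.reverse[k] = (j + k) % 3 := by
    intro k hk
    rw [List.getElem_of_eq hrev]
    simp
  have hlen : L.reverse.length = L.length := List.length_reverse
  have h0 : L.reverse[0]'(by omega) = (j + 0) % 3 := hRe 0 (by omega)
  have h1 : L.reverse[1]'(by omega) = (j + 1) % 3 := hRe 1 (by omega)
  rw [List.getElem_reverse] at h0 h1
  rw [hLe _ (by omega)] at h0
  rw [hLe _ (by omega)] at h1
  omega
end

section
/- The periodic infinite word (012)^ω avoids the formula with reversal xy · yx̄ · ȳ: there do not exist nonempty words U, V such that UV, V·reverse(U), and reverse(V) are all factors of (012)^ω. -/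
lemma factor_spec (u : List ℕ) (h : IsFactorOf u (fun n => n % 3)) :
    ∃ i : ℕ, ∀ k, k < u.length → u[k]? = some ((i + k) % 3) := by
  obtain ⟨i, hi⟩ := h
  refine ⟨i, fun k hk => ?_⟩
  conv_lhs => rw [hi]
  simp [List.getElem?_eq_getElem, hk]

/-- (012)^ω avoids the formula with reversal xy · yx̄ · ȳ. -/
theorem periodic012_avoids_xy_yxbar_ybar :
    ¬ ∃ U V : List ℕ, U ≠ [] ∧ V ≠ [] ∧
      IsFactorOf (U ++ V) (fun n => n % 3) ∧
      IsFactorOf (V ++ U.reverse) (fun n => n % 3) ∧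
      IsFactorOf V.reverse (fun n => n % 3) := by
  rintro ⟨U, V, hU, hV, h1, h2, h3⟩
  obtain ⟨i1, s1⟩ := factor_spec _ h1
  obtain ⟨i2, s2⟩ := factor_spec _ h2
  obtain ⟨i3, s3⟩ := factor_spec _ h3
  have hm1 : 1 ≤ U.length := List.length_pos_iff.mpr hU
  have hn1 : 1 ≤ V.length := List.length_pos_iff.mpr hV
  have hlen : (U ++ V).length = U.length + V.length := by simp
  have hlen2 : (V ++ U.reverse).length = V.length + U.length := by simp
  have hlen3 : V.reverse.length = V.length := by simp
  -- V[0]? from U ++ V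
  have t1 : (U ++ V)[U.length]? = V[0]? := by
    rw [List.getElem?_append_right (le_refl _), Nat.sub_self]
  have q1 : V[0]? = some ((i1 + U.length) % 3) :=
    t1.symm.trans (s1 U.length (by omega))
  rcases Nat.lt_or_ge V.length 2 with hn2 | hn2
  · -- |V| = 1
    -- last letter of U from U ++ V
    have t2 : (U ++ V)[U.length - 1]? = U[U.length - 1]? :=
      List.getElem?_append_left (by omega)
    have q2 : U[U.length - 1]? = some ((i1 + (U.length - 1)) % 3) :=
      t2.symm.trans (s1 (U.length - 1) (by omega))
    -- V[0]? from V ++ U.reverse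
    have t3 : (V ++ U.reverse)[0]? = V[0]? :=
      List.getElem?_append_left (by omega)
    have q3 : V[0]? = some ((i2 + 0) % 3) :=
      t3.symm.trans (s2 0 (by omega))
    -- last letter of U from V ++ U.reverse (position 1, since |V| = 1)
    have t4 : (V ++ U.reverse)[1]? = U[U.length - 1]? := by
      rw [List.getElem?_append_right (by omega)]
      rw [show 1 - V.length = 0 from by omega]
      rw [List.getElem?_reverse (by omega), Nat.sub_zero]
    have q4 : U[U.length - 1]? = some ((i2 + 1) % 3) :=
      t4.symm.trans (s2 1 (by omega))
    have e1 : (i1 + U.length) % 3 = (i2 + 0) % 3 := by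
      have := q1.symm.trans q3; simpa using this
    have e2 : (i1 + (U.length - 1)) % 3 = (i2 + 1) % 3 := by
      have := q2.symm.trans q4; simpa using this
    omega
  · -- |V| ≥ 2
    -- V[1]? from U ++ V
    have t2 : (U ++ V)[U.length + 1]? = V[1]? := by
      rw [List.getElem?_append_right (by omega)]
      rw [show U.length + 1 - U.length = 1 from by omega]
    have q2 : V[1]? = some ((i1 + (U.length + 1)) % 3) :=
      t2.symm.trans (s1 (U.length + 1) (by omega))
    -- V[0]? and V[1]? from V.reverse
    have t3 : V.reverse[V.length - 1]? = V[0]? := by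
      rw [List.getElem?_reverse (by omega)]
      rw [show V.length - 1 - (V.length - 1) = 0 from by omega]
    have q3 : V[0]? = some ((i3 + (V.length - 1)) % 3) :=
      t3.symm.trans (s3 (V.length - 1) (by omega))
    have t4 : V.reverse[V.length - 2]? = V[1]? := by
      rw [List.getElem?_reverse (by omega)]
      rw [show V.length - 1 - (V.length - 2) = 1 from by omega]
    have q4 : V[1]? = some ((i3 + (V.length - 2)) % 3) :=
      t4.symm.trans (s3 (V.length - 2) (by omega))
    have e1 : (i1 + U.length) % 3 = (i3 + (V.length - 1)) % 3 := by
      have := q1.symm.trans q3; simpa using this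
    have e2 : (i1 + (U.length + 1)) % 3 = (i3 + (V.length - 2)) % 3 := by
      have := q2.symm.trans q4; simpa using this
    omega
end

section
/- The periodic infinite word (0123)^ω over four letters avoids the formula with reversal xy · yz · z̄x̄ · ȳ: there are no nonempty words U, V, W such that UV, VW, reverse(W)·reverse(U), and reverse(V) are all factors of (0123)^ω. -/
lemma factor_get {u : List ℕ} {w : ℕ → ℕ} (h : IsFactorOf u w) :
    ∃ i, ∀ k (hk : k < u.length), u[k] = w (i + k) := by
  obtain ⟨i, hi⟩ := h
  refine ⟨i, fun k hk => ?_⟩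
  rw [List.getElem_of_eq hi hk]
  simp

/-- (0123)^ω avoids the formula with reversal xy · yz · z̄x̄ · ȳ. -/
theorem periodic0123_avoids :
    ¬ ∃ U V W : List ℕ, U ≠ [] ∧ V ≠ [] ∧ W ≠ [] ∧
      IsFactorOf (U ++ V) (fun n => n % 4) ∧
      IsFactorOf (V ++ W) (fun n => n % 4) ∧
      IsFactorOf (W.reverse ++ U.reverse) (fun n => n % 4) ∧
      IsFactorOf V.reverse (fun n => n % 4) := by
  rintro ⟨U, V, W, hU, hV, hW, h1, h2, h3, h4⟩
  obtain ⟨i, hi⟩ := factor_get h1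
  obtain ⟨j, hj⟩ := factor_get h2
  obtain ⟨k, hk⟩ := factor_get h3
  obtain ⟨m, hm⟩ := factor_get h4
  have ha : 1 ≤ U.length := List.length_pos_iff.mpr hU
  have hb : 1 ≤ W.length := List.length_pos_iff.mpr hW
  have hL : 1 ≤ V.length := List.length_pos_iff.mpr hV
  -- V has length 1
  have hL1 : V.length = 1 := by
    by_contra hne
    have hL2 : 2 ≤ V.length := by omega
    -- from V ++ W:
    have e0 : V[0]'(by omega) = j % 4 := by
      have := hj 0 (by simp; omega)
      rw [List.getElem_append_left (by omega)] at this
      simpa using this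
    have e1 : V[1]'(by omega) = (j + 1) % 4 := by
      have := hj 1 (by simp; omega)
      rw [List.getElem_append_left (by omega)] at this
      simpa using this
    -- from V.reverse:
    have f0 : V[0]'(by omega) = (m + (V.length - 1)) % 4 := by
      have := hm (V.length - 1) (by simp; omega)
      rw [List.getElem_reverse] at this
      simp only [show V.length - 1 - (V.length - 1) = 0 from by omega] at this
      simpa using this
    have f1 : V[1]'(by omega) = (m + (V.length - 2)) % 4 := by
      have := hm (V.length - 2) (by simp; omega)
      rw [List.getElem_reverse] at this
      simp only [show V.length - 1 - (V.length - 2) = 1 from by omega] at this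
      simpa using this
    omega
  -- now the three pair constraints
  -- x = last of U, c = V[0], y = first of W
  have ex : U[U.length - 1]'(by omega) = (i + (U.length - 1)) % 4 := by
    have := hi (U.length - 1) (by simp; omega)
    rw [List.getElem_append_left (by omega)] at this
    exact this
  have ec1 : V[0]'(by omega) = (i + U.length) % 4 := by
    have := hi U.length (by simp; omega)
    rw [List.getElem_append_right (by omega)] at this
    simpa using this
  have ec2 : V[0]'(by omega) = j % 4 := by
    have := hj 0 (by simp; omega)
    rw [List.getElem_append_left (by omega)] at this
    simpa using this
  have ey : W[0]'(by omega) = (j + 1) % 4 := by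
    have := hj 1 (by simp; omega)
    rw [List.getElem_append_right (by omega)] at this
    simp only [hL1] at this ⊢
    simpa using this
  have fy : W[0]'(by omega) = (k + (W.length - 1)) % 4 := by
    have := hk (W.length - 1) (by simp; omega)
    rw [List.getElem_append_left (by simp; omega)] at this
    rw [List.getElem_reverse] at this
    simp only [show W.length - 1 - (W.length - 1) = 0 from by omega] at this
    simpa using this
  have fx : U[U.length - 1]'(by omega) = (k + W.length) % 4 := by
    have := hk W.length (by simp; omega)
    rw [List.getElem_append_right (by simp)] at this
    simp only [List.length_reverse, Nat.sub_self] at this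
    rw [List.getElem_reverse] at this
    simpa using this
  omega
end

section
/- Let g be the morphism on {0,1,2,3}* defined by g(0)=01, g(1)=2, g(2)=031, g(3)=3, and let w = g^ω(0) be its fixed point starting with 0. Then the set of reversible factors of w (factors u such that both u and reverse(u) are factors of w) is exactly the set of factors of the words 303, 323, 03130, and 31013. In particular, w has no reversible factor of length 6 or more. -/
set_option maxRecDepth 20000


/-- The morphism g = 01/2/031/3. -/
def g : ℕ → List ℕ
  | 0 => [0, 1]
  | 1 => [2]
  | 2 => [0, 3, 1]
  | _ => [3]

def IsPrefixOf (l : List ℕ) (w : ℕ → ℕ) : Prop :=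
  ∀ i, i < l.length → l[i]? = some (w i)

/-- w is the infinite fixed point g^ω(0): every iterate g^n(0) is a prefix of w. -/
def IsFixedPointG (w : ℕ → ℕ) : Prop :=
  ∀ n : ℕ, IsPrefixOf ((fun l => l.flatMap g)^[n] [0]) w

/-! ### Auxiliary definitions -/

/-- The n-th iterate of g on [0]. -/
def Wit (n : ℕ) : List ℕ := (fun l => l.flatMap g)^[n] [0]

/-- All infixes of a list (with repetitions). -/
def infixesL (l : List ℕ) : List (List ℕ) := l.tails.flatMap List.inits

/-- The set of factors of length ≤ 6 of the fixed point. -/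
def Sfac : List (List ℕ) :=
  [[], [0], [1], [2], [3], [0,1], [0,3], [1,0], [1,2], [1,3], [2,0], [2,3], [3,0], [3,1], [3,2], [0,1,2], [0,1,3], [0,3,1], [1,0,1], [1,2,0], [1,2,3], [1,3,0], [1,3,2], [2,0,1], [2,0,3], [2,3,0], [3,0,1], [3,0,3], [3,1,0], [3,1,3], [3,2,0], [3,2,3], [0,1,2,0], [0,1,2,3], [0,1,3,2], [0,3,1,0], [0,3,1,3], [1,0,1,2], [1,0,1,3], [1,2,0,3], [1,2,3,0], [1,3,0,1], [1,3,2,0], [1,3,2,3], [2,0,1,2], [2,0,3,1], [2,3,0,1], [2,3,0,3], [3,0,1,2], [3,0,1,3], [3,0,3,1], [3,1,0,1], [3,1,3,0], [3,2,0,1], [3,2,3,0], [0,1,2,0,3], [0,1,2,3,0], [0,1,3,2,0], [0,1,3,2,3], [0,3,1,0,1], [0,3,1,3,0], [1,0,1,2,0], [1,0,1,3,2], [1,2,0,3,1], [1,2,3,0,3], [1,3,0,1,2], [1,3,0,1,3], [1,3,2,0,1], [1,3,2,3,0], [2,0,1,2,0], [2,0,1,2,3], [2,0,3,1,0], [2,0,3,1,3],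 [2,3,0,1,2], [2,3,0,3,1], [3,0,1,2,0], [3,0,1,2,3], [3,0,1,3,2], [3,0,3,1,0], [3,0,3,1,3], [3,1,0,1,2], [3,1,0,1,3], [3,1,3,0,1], [3,2,0,1,2], [3,2,3,0,1], [0,1,2,0,3,1], [0,1,2,3,0,3], [0,1,3,2,0,1], [0,1,3,2,3,0], [0,3,1,0,1,2], [0,3,1,0,1,3], [0,3,1,3,0,1], [1,0,1,2,0,3], [1,0,1,3,2,0], [1,0,1,3,2,3], [1,2,0,3,1,0], [1,2,0,3,1,3], [1,2,3,0,3,1], [1,3,0,1,2,0], [1,3,0,1,3,2], [1,3,2,0,1,2], [1,3,2,3,0,1], [2,0,1,2,0,3], [2,0,1,2,3,0], [2,0,3,1,0,1], [2,0,3,1,3,0], [2,3,0,1,2,0], [2,3,0,1,2,3], [2,3,0,3,1,0], [2,3,0,3,1,3], [3,0,1,2,0,3], [3,0,1,2,3,0], [3,0,1,3,2,0], [3,0,1,3,2,3], [3,0,3,1,0,1], [3,0,3,1,3,0], [3,1,0,1,2,0], [3,1,0,1,3,2], [3,1,3,0,1,2], [3,1,3,0,1,3], [3,2,0,1,2,0],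 [3,2,0,1,2,3], [3,2,3,0,1,2]]

lemma mem_infixesL {u l : List ℕ} : u ∈ infixesL l ↔ u <:+: l := by
  simp only [infixesL, List.mem_flatMap, List.mem_tails, List.mem_inits]
  rw [List.infix_iff_prefix_suffix]
  constructor
  · rintro ⟨t, ht, hu⟩; exact ⟨t, hu, ht⟩
  · rintro ⟨t, hu, ht⟩; exact ⟨t, ht, hu⟩

lemma one_le_length_g (a : ℕ) : 1 ≤ (g a).length := by
  unfold g; split <;> simp

lemma length_le_length_flatMap (l : List ℕ) : l.length ≤ (l.flatMap g).length := by
  induction l with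
  | nil => simp
  | cons a l ih =>
    have := one_le_length_g a
    simp only [List.flatMap_cons, List.length_append, List.length_cons]
    omega

lemma prefix_take_flatMap {u l : List ℕ} (m : ℕ) (h : u <+: l.flatMap g)
    (hm : u.length ≤ m) : u <+: (l.take m).flatMap g := by
  rcases le_or_gt l.length m with hl | hl
  · rwa [List.take_of_length_le hl]
  · have hpre : (l.take m).flatMap g <+: l.flatMap g := by
      conv_rhs => rw [← List.take_append_drop m l]
      rw [List.flatMap_append]
      exact List.prefix_append _ _
    have hlen : m ≤ ((l.take m).flatMap g).length := by
      have h1 := length_le_length_flatMap (l.take m)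
      rw [List.length_take] at h1
      omega
    exact List.prefix_of_prefix_length_le h hpre (by omega)

lemma infix_append_cases {u X Y : List ℕ} (h : u <:+: X ++ Y) :
    u <:+: X ∨ u <:+: Y ∨
      ∃ u₁ u₂, u = u₁ ++ u₂ ∧ u₁ ≠ [] ∧ u₁ <:+ X ∧ u₂ <+: Y := by
  obtain ⟨s, t, hst⟩ := h
  rw [List.append_assoc] at hst
  rcases List.append_eq_append_iff.mp hst with ⟨a, ha1, ha2⟩ | ⟨c, hc1, hc2⟩
  · rcases List.append_eq_append_iff.mp ha2 with ⟨d, hd1, hd2⟩ | ⟨e, he1, he2⟩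
    · left; exact ⟨s, d, by rw [ha1, hd1, List.append_assoc]⟩
    · by_cases hae : a = []
      · right; left
        exact ⟨[], t, by rw [List.nil_append, he1, hae, List.nil_append, he2]⟩
      · by_cases hee : e = []
        · left
          refine ⟨s, [], ?_⟩
          rw [he1, hee, List.append_nil, List.append_nil, ha1]
        · right; right
          exact ⟨a, e, he1, hae, ⟨s, ha1.symm⟩, ⟨t, he2.symm⟩⟩
  · right; left
    exact ⟨c, t, by rw [List.append_assoc]; exact hc2.symm⟩

lemma descent : ∀ (l : List ℕ) (u : List ℕ), u <:+: l.flatMap g → u.length ≤ 6 →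
    ∃ v, v <:+: l ∧ v.length ≤ 6 ∧ u <:+: v.flatMap g := by
  intro l
  induction l with
  | nil =>
    intro u h _
    exact ⟨[], List.infix_rfl, by simp, by simpa using h⟩
  | cons a l ih =>
    intro u h hu
    rw [List.flatMap_cons] at h
    rcases infix_append_cases h with h1 | h2 | ⟨u₁, u₂, rfl, hne, hsuf, hpre⟩
    · exact ⟨[a], ⟨[], l, by simp⟩, by simp,
        by simpa only [List.flatMap_cons, List.flatMap_nil, List.append_nil] using h1⟩
    · obtain ⟨v, hv, hvl, hvu⟩ := ih u h2 hu
      exact ⟨v, hv.trans (List.infix_cons List.infix_rfl), hvl, hvu⟩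
    · have hne' : 1 ≤ u₁.length := List.length_pos_iff.mpr hne
      have hlen2 : u₂.length ≤ 5 := by
        rw [List.length_append] at hu; omega
      have hp5 : u₂ <+: (l.take 5).flatMap g := prefix_take_flatMap 5 hpre hlen2
      refine ⟨a :: l.take 5, ?_, ?_, ?_⟩
      · exact ⟨[], l.drop 5, by simp [List.take_append_drop]⟩
      · simp only [List.length_cons, List.length_take]; omega
      · rw [List.flatMap_cons]
        obtain ⟨s, hs'⟩ := hsuf
        obtain ⟨t, ht'⟩ := hp5
        exact ⟨s, t, by rw [← hs', ← ht']; simp only [List.append_assoc]⟩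

lemma gClosure : ∀ v ∈ Sfac, ∀ u ∈ infixesL (v.flatMap g), u.length ≤ 6 → u ∈ Sfac := by
  decide

lemma Wit_succ (n : ℕ) : Wit (n + 1) = (Wit n).flatMap g := by
  unfold Wit
  rw [Function.iterate_succ_apply']

lemma Wit_spec : ∀ n, (∃ t, Wit n = 0 :: t) ∧ n + 1 ≤ (Wit n).length := by
  intro n
  induction n with
  | zero => exact ⟨⟨[], rfl⟩, by simp [Wit]⟩
  | succ n ih =>
    obtain ⟨⟨t, ht⟩, hlen⟩ := ih
    rw [ht] at hlen
    constructor
    · exact ⟨1 :: t.flatMap g, by rw [Wit_succ, ht, List.flatMap_cons]; rfl⟩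
    · rw [Wit_succ, ht, List.flatMap_cons]
      have h1 := length_le_length_flatMap t
      simp only [List.length_append, List.length_cons] at *
      have : (g 0).length = 2 := rfl
      omega

lemma S_complete : ∀ n, ∀ u : List ℕ, u <:+: Wit n → u.length ≤ 6 → u ∈ Sfac := by
  intro n
  induction n with
  | zero =>
    intro u h _
    have h' : u ∈ infixesL [0] := mem_infixesL.mpr h
    have : infixesL [0] = [[], [0], []] := rfl
    rw [this] at h'
    simp only [List.mem_cons, List.not_mem_nil, or_false] at h'
    rcases h' with rfl | rfl | rfl <;> decide
  | succ n ih =>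
    intro u h hu
    rw [Wit_succ] at h
    obtain ⟨v, hv, hv6, huv⟩ := descent (Wit n) u h hu
    exact gClosure v (ih v hv hv6) u (mem_infixesL.mpr huv) hu

lemma isFactorOf_iff' {u : List ℕ} {w : ℕ → ℕ} {i : ℕ}
    (h : ∀ k, k < u.length → u[k]? = some (w (i + k))) : IsFactorOf u w := by
  refine ⟨i, ?_⟩
  apply List.ext_getElem?
  intro k
  rcases lt_or_ge k u.length with hk | hk
  · rw [h k hk, List.getElem?_map, List.getElem?_range hk]
    rfl
  · rw [List.getElem?_eq_none hk, List.getElem?_eq_none (by simpa using hk)]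

lemma getElem?_of_isFactorOf {u : List ℕ} {w : ℕ → ℕ} {i : ℕ}
    (hi : u = (List.range u.length).map fun k => w (i + k)) :
    ∀ k, k < u.length → u[k]? = some (w (i + k)) := by
  intro k hk
  conv_lhs => rw [hi]
  rw [List.getElem?_map, List.getElem?_range hk]
  rfl

lemma isFactorOf_of_infix {u v : List ℕ} {w : ℕ → ℕ} (hv : IsFactorOf v w)
    (h : u <:+: v) : IsFactorOf u w := by
  obtain ⟨i, hi⟩ := hv
  obtain ⟨s, t, hst⟩ := h
  have hv' := getElem?_of_isFactorOf hi
  apply isFactorOf_iff' (i := i + s.length)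
  intro k hk
  have hlt : s.length + k < v.length := by
    rw [← hst]; simp only [List.length_append]; omega
  have h1 : v[s.length + k]? = u[k]? := by
    rw [← hst, List.append_assoc, List.getElem?_append_right (by omega),
      Nat.add_sub_cancel_left, List.getElem?_append_left hk]
  rw [← h1, hv' _ hlt, Nat.add_assoc]

lemma isFactorOf_Wit {w : ℕ → ℕ} (hw : IsFixedPointG w) (N : ℕ) :
    IsFactorOf (Wit N) w := by
  apply isFactorOf_iff' (i := 0)
  intro k hk
  rw [Nat.zero_add]; exact hw N k hk

lemma mem_Sfac_of_factor {w : ℕ → ℕ} (hw : IsFixedPointG w) {u : List ℕ}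
    (h : IsFactorOf u w) (hu : u.length ≤ 6) : u ∈ Sfac := by
  obtain ⟨i, hi⟩ := h
  have hu' := getElem?_of_isFactorOf hi
  have hWlen : i + 6 + 1 ≤ (Wit (i + 6)).length := (Wit_spec (i + 6)).2
  have hW : ∀ j, j < (Wit (i + 6)).length → (Wit (i + 6))[j]? = some (w j) := hw (i + 6)
  have heq : u = ((Wit (i + 6)).drop i).take u.length := by
    apply List.ext_getElem?
    intro k
    rcases lt_or_ge k u.length with hk | hk
    · rw [hu' k hk, List.getElem?_take_of_lt hk, List.getElem?_drop]
      exact (hW (i + k) (by omega)).symm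
    · rw [List.getElem?_eq_none hk]
      rw [List.getElem?_eq_none (by simp only [List.length_take, List.length_drop]; omega)]
  have hinf : u <:+: Wit (i + 6) := by
    rw [heq]
    exact (List.take_prefix _ _).isInfix.trans (List.drop_suffix _ _).isInfix
  exact S_complete (i + 6) u hinf hu

lemma no_long_reversible {w : ℕ → ℕ} (hw : IsFixedPointG w) (u : List ℕ)
    (h6 : 6 ≤ u.length) (h1 : IsFactorOf u w) (h2 : IsFactorOf u.reverse w) : False := by
  set u' := u.take 6 with hu'
  have hlen : u'.length = 6 := by simp [hu', h6]
  have hf1 : IsFactorOf u' w := isFactorOf_of_infix h1 (List.take_prefix 6 u).isInfix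
  have hf2 : IsFactorOf u'.reverse w := by
    apply isFactorOf_of_infix h2
    exact (List.reverse_suffix.mpr (List.take_prefix 6 u)).isInfix
  have hm1 : u' ∈ Sfac := mem_Sfac_of_factor hw hf1 (by omega)
  have hm2 : u'.reverse ∈ Sfac := mem_Sfac_of_factor hw hf2 (by simp [hlen])
  have key : ∀ v ∈ Sfac, v.length = 6 → v.reverse ∉ Sfac := by decide
  exact key u' hm1 hlen hm2

/-- The reversible factors of g^ω(0) are exactly the factors of 303, 323, 03130,
31013; in particular there is no reversible factor of length ≥ 6. -/
theorem reversible_factors_of_g_fixed_point (w : ℕ → ℕ) (hw : IsFixedPointG w) :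
    (∀ u : List ℕ, (IsFactorOf u w ∧ IsFactorOf u.reverse w) ↔
      (u <:+: [3,0,3] ∨ u <:+: [3,2,3] ∨ u <:+: [0,3,1,3,0] ∨ u <:+: [3,1,0,1,3])) ∧
    (∀ u : List ℕ, 6 ≤ u.length → ¬ (IsFactorOf u w ∧ IsFactorOf u.reverse w)) := by
  have hW7 : IsFactorOf (Wit 7) w := isFactorOf_Wit hw 7
  have hocc : ([3,0,3] : List ℕ) <:+: Wit 7 ∧ ([3,2,3] : List ℕ) <:+: Wit 7 ∧
      ([0,3,1,3,0] : List ℕ) <:+: Wit 7 ∧ ([3,1,0,1,3] : List ℕ) <:+: Wit 7 := by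
    decide
  constructor
  · intro u
    constructor
    · rintro ⟨h1, h2⟩
      rcases le_or_gt u.length 5 with hlen | hlen
      · have hm1 : u ∈ Sfac := mem_Sfac_of_factor hw h1 (by omega)
        have hm2 : u.reverse ∈ Sfac := mem_Sfac_of_factor hw h2 (by simp; omega)
        have key : ∀ v ∈ Sfac, v.length ≤ 5 → v.reverse ∈ Sfac →
            (v <:+: [3,0,3] ∨ v <:+: [3,2,3] ∨ v <:+: [0,3,1,3,0] ∨
              v <:+: [3,1,0,1,3]) := by decide
        exact key u hm1 hlen hm2
      · exact (no_long_reversible hw u (by omega) h1 h2).elim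
    · intro h
      have hrev : u.reverse <:+: [3,0,3] ∨ u.reverse <:+: [3,2,3] ∨
          u.reverse <:+: [0,3,1,3,0] ∨ u.reverse <:+: [3,1,0,1,3] := by
        rcases h with h | h | h | h
        · exact Or.inl (by have := List.reverse_infix.mpr h; simpa using this)
        · exact Or.inr (Or.inl (by have := List.reverse_infix.mpr h; simpa using this))
        · exact Or.inr (Or.inr (Or.inl
            (by have := List.reverse_infix.mpr h; simpa using this)))
        · exact Or.inr (Or.inr (Or.inr
            (by have := List.reverse_infix.mpr h; simpa using this)))
      constructor
      · rcases h with h | h | h | h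
        · exact isFactorOf_of_infix hW7 (h.trans hocc.1)
        · exact isFactorOf_of_infix hW7 (h.trans hocc.2.1)
        · exact isFactorOf_of_infix hW7 (h.trans hocc.2.2.1)
        · exact isFactorOf_of_infix hW7 (h.trans hocc.2.2.2)
      · rcases hrev with h | h | h | h
        · exact isFactorOf_of_infix hW7 (h.trans hocc.1)
        · exact isFactorOf_of_infix hW7 (h.trans hocc.2.1)
        · exact isFactorOf_of_infix hW7 (h.trans hocc.2.2.1)
        · exact isFactorOf_of_infix hW7 (h.trans hocc.2.2.2)
  · rintro u h6 ⟨h1, h2⟩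
    exact no_long_reversible hw u h6 h1 h2
end

section
/- Let g = 01/2/031/3 and w = g^ω(0). Then w avoids the pattern xx: no factor of w is a square UU with U nonempty. -/
namespace GSF

lemma g_zero : g 0 = [0,1] := rfl
lemma g_one : g 1 = [2] := rfl
lemma g_two : g 2 = [0,3,1] := rfl
lemma g_big (x : ℕ) : g (x+3) = [3] := rfl

lemma g_ne_nil (x : ℕ) : g x ≠ [] := by
  rcases x with _|_|_|x <;> simp [g_zero, g_one, g_two, g_big]

lemma g_len_pos (x : ℕ) : 0 < (g x).length :=
  List.length_pos_iff.mpr (g_ne_nil x)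

lemma g_len_le (x : ℕ) : (g x).length ≤ 3 := by
  rcases x with _|_|_|x <;> simp [g_zero, g_one, g_two, g_big]

def gpos (w : ℕ → ℕ) (k : ℕ) : ℕ := ((List.range k).map (fun j => (g (w j)).length)).sum

lemma gpos_zero (w : ℕ → ℕ) : gpos w 0 = 0 := by simp [gpos]

lemma gpos_succ (w : ℕ → ℕ) (k : ℕ) : gpos w (k+1) = gpos w k + (g (w k)).length := by
  simp [gpos, List.range_succ]

lemma gpos_lt_succ (w : ℕ → ℕ) (k : ℕ) : gpos w k < gpos w (k+1) := by
  rw [gpos_succ]; have := g_len_pos (w k); omega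

lemma gpos_mono (w : ℕ → ℕ) : StrictMono (gpos w) :=
  strictMono_nat_of_lt_succ (gpos_lt_succ w)

lemma gpos_add_ge (w : ℕ → ℕ) (k m : ℕ) : gpos w k + m ≤ gpos w (k + m) := by
  induction m with
  | zero => simp
  | succ m ih =>
    have h1 := gpos_lt_succ w (k+m)
    have h2 : k + (m+1) = (k+m)+1 := rfl
    rw [h2]; omega

lemma gpos_le_iff (w : ℕ → ℕ) {a b : ℕ} : gpos w a < gpos w b ↔ a < b :=
  (gpos_mono w).lt_iff_lt

lemma gpos_inj (w : ℕ → ℕ) {a b : ℕ} (h : gpos w a = gpos w b) : a = b :=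
  (gpos_mono w).injective h

lemma flatlen (l : List ℕ) : l.length ≤ (l.flatMap g).length := by
  induction l with
  | nil => simp
  | cons a l ih =>
    rw [List.flatMap_cons, List.length_append, List.length_cons]
    have := g_len_pos a; omega

lemma flat_idx : ∀ (l : List ℕ) (k : ℕ), k < l.length → ∀ (t : ℕ), t < (g (l.getD k 0)).length →
    (l.flatMap g)[(((l.take k).flatMap g).length + t)]? = (g (l.getD k 0))[t]? := by
  intro l
  induction l with
  | nil => intro k h; simp at h
  | cons a l ih =>
    intro k hk t ht
    cases k with
    | zero =>
      simp only [List.take_zero, List.flatMap_nil, List.length_nil, Nat.zero_add,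
        List.getD_cons_zero] at *
      rw [List.flatMap_cons, List.getElem?_append_left ht]
    | succ k =>
      simp only [List.getD_cons_succ] at *
      rw [List.take_succ_cons, List.flatMap_cons, List.flatMap_cons, List.length_append]
      rw [Nat.add_assoc, List.getElem?_append_right (by omega)]
      rw [Nat.add_sub_cancel_left]
      exact ih k (by simpa using hk) t ht

def P (n : ℕ) : List ℕ := (fun l => l.flatMap g)^[n] [0]

lemma P_succ (n : ℕ) : P (n+1) = (P n).flatMap g := by
  simp [P, Function.iterate_succ_apply']

variable {w : ℕ → ℕ}

lemma hwP (hw : IsFixedPointG w) : ∀ n, IsPrefixOf (P n) w := fun n => hw n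

lemma w_zeroth (hw : IsFixedPointG w) : w 0 = 0 := by
  have h := hwP hw 0 0 (by simp [P])
  simp [P] at h
  exact h.symm

lemma P_len (hw : IsFixedPointG w) : ∀ n, n + 1 ≤ (P n).length := by
  intro n
  induction n with
  | zero => simp [P]
  | succ n ih =>
    rw [P_succ]
    rcases h : P n with _ | ⟨a, l⟩
    · rw [h] at ih; simp at ih
    · have ha : a = 0 := by
        have h0 := hwP hw n 0 (by rw [h]; simp)
        rw [h] at h0; simp at h0
        rw [h0, w_zeroth hw]
      rw [List.flatMap_cons, List.length_append, ha, g_zero]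
      have h2 := flatlen l
      have h3 : (P n).length = l.length + 1 := by rw [h]; simp
      simp only [List.length_cons] at ih ⊢
      omega

lemma P_eq (hw : IsFixedPointG w) (n : ℕ) :
    P n = (List.range (P n).length).map w := by
  apply List.ext_getElem?
  intro i
  by_cases hi : i < (P n).length
  · rw [hwP hw n i hi, List.getElem?_map, List.getElem?_range hi]; simp
  · rw [List.getElem?_eq_none (by omega), List.getElem?_eq_none (by simpa using hi)]

lemma blockL (hw : IsFixedPointG w) (k t : ℕ) (ht : t < (g (w k)).length) :
    w (gpos w k + t) = (g (w k)).getD t 0 := by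
  have hlen := P_len hw k
  have hlk : k < (P k).length := by omega
  have hPe := P_eq hw k
  have hget : (P k).getD k 0 = w k := by
    have hlk2 : k < (List.map w (List.range (P k).length)).length := by simpa using hlk
    rw [hPe, List.getD_eq_getElem _ _ hlk2]
    simp
  have hidx := flat_idx (P k) k hlk t (by rw [hget]; exact ht)
  rw [hget] at hidx
  have htake : (((P k).take k).flatMap g).length = gpos w k := by
    conv_lhs => rw [hPe]
    have hmin : min k (P k).length = k := Nat.min_eq_left (Nat.le_of_lt (by simpa using hlk))
    rw [← List.map_take, List.take_range, hmin]
    rw [List.length_flatMap, List.map_map]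
    rfl
  rw [htake] at hidx
  rw [← P_succ] at hidx
  have hsome : (g (w k))[t]? = some ((g (w k)).getD t 0) := by
    rw [List.getElem?_eq_getElem ht, List.getD_eq_getElem _ _ ht]
  rw [hsome] at hidx
  have hlt : gpos w k + t < (P (k+1)).length := by
    have := List.getElem?_eq_some_iff.mp hidx
    exact this.1
  have h2 := hwP hw (k+1) _ hlt
  rw [hidx] at h2
  exact (Option.some_injective _ h2).symm


lemma cover (w : ℕ → ℕ) (p : ℕ) : ∃ k, gpos w k ≤ p ∧ p < gpos w (k+1) := by
  induction p with
  | zero =>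
    refine ⟨0, by simp [gpos_zero], ?_⟩
    have := gpos_lt_succ w 0
    have h0 := gpos_zero w
    omega
  | succ p ih =>
    obtain ⟨k, h1, h2⟩ := ih
    by_cases h : p + 1 < gpos w (k+1)
    · exact ⟨k, by omega, h⟩
    · exact ⟨k+1, by omega, by have := gpos_lt_succ w (k+1); omega⟩

lemma g_getD_le (x t : ℕ) : (g x).getD t 0 ≤ 3 := by
  rcases x with _|_|_|x <;> rcases t with _|_|_|t <;> simp [g, List.getD]

lemma letters (hw : IsFixedPointG w) (p : ℕ) : w p ≤ 3 := by
  obtain ⟨k, h1, h2⟩ := cover w p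
  have ht : p - gpos w k < (g (w k)).length := by
    have := gpos_succ w k; omega
  have hb := blockL hw k (p - gpos w k) ht
  have hp : gpos w k + (p - gpos w k) = p := by omega
  rw [hp] at hb
  rw [hb]
  exact g_getD_le _ _

lemma notB (w : ℕ → ℕ) {a p b : ℕ} (h1 : gpos w a < p) (h2 : p < gpos w (a+1)) :
    gpos w b ≠ p := by
  intro h
  rcases lt_or_ge b (a+1) with hb | hb
  · have : gpos w b ≤ gpos w a := (gpos_mono w).le_iff_le.mpr (by omega)
    omega
  · have : gpos w (a+1) ≤ gpos w b := (gpos_mono w).le_iff_le.mpr hb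
    omega

lemma gpos_ge (w : ℕ → ℕ) (k : ℕ) : k ≤ gpos w k := by
  have := gpos_add_ge w 0 k
  have h0 := gpos_zero w
  simpa [h0] using this

lemma gpos_one (hw : IsFixedPointG w) : gpos w 1 = 2 := by
  rw [gpos_succ, gpos_zero, w_zeroth hw, g_zero]; simp

lemma gpos_ge1 (hw : IsFixedPointG w) {k : ℕ} (hk : 1 ≤ k) : k + 1 ≤ gpos w k := by
  have h1 := gpos_add_ge w 1 (k - 1)
  have h2 := gpos_one hw
  have h3 : 1 + (k-1) = k := by omega
  rw [h3] at h1
  omega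

lemma master (hw : IsFixedPointG w) (p : ℕ) : ∃ k,
    (w k = 0 ∧ gpos w k = p ∧ gpos w (k+1) = p+2 ∧ w p = 0 ∧ w (p+1) = 1) ∨
    (w k = 0 ∧ gpos w k + 1 = p ∧ gpos w (k+1) = p+1 ∧ w (gpos w k) = 0 ∧ w p = 1) ∨
    (w k = 1 ∧ gpos w k = p ∧ gpos w (k+1) = p+1 ∧ w p = 2) ∨
    (w k = 2 ∧ gpos w k = p ∧ gpos w (k+1) = p+3 ∧ w p = 0 ∧ w (p+1) = 3 ∧ w (p+2) = 1) ∨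
    (w k = 2 ∧ gpos w k + 1 = p ∧ gpos w (k+1) = p+2 ∧ w (gpos w k) = 0 ∧ w p = 3 ∧ w (p+1) = 1) ∨
    (w k = 2 ∧ gpos w k + 2 = p ∧ gpos w (k+1) = p+1 ∧ w (gpos w k) = 0 ∧ w (gpos w k + 1) = 3 ∧ w p = 1) ∨
    (w k = 3 ∧ gpos w k = p ∧ gpos w (k+1) = p+1 ∧ w p = 3) := by
  obtain ⟨k, h1, h2⟩ := cover w p
  refine ⟨k, ?_⟩
  have hlen := gpos_succ w k
  have hw3 := letters hw k
  have hcase : w k = 0 ∨ w k = 1 ∨ w k = 2 ∨ w k = 3 := by omega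
  rcases hcase with h|h|h|h
  · have e0 : w (gpos w k) = 0 := by
      simpa [h, g_zero] using blockL hw k 0 (by simp [h, g_zero])
    have e1 : w (gpos w k + 1) = 1 := by
      simpa [h, g_zero] using blockL hw k 1 (by simp [h, g_zero])
    have hl : gpos w (k+1) = gpos w k + 2 := by rw [hlen, h, g_zero]; simp
    have hp : p = gpos w k ∨ p = gpos w k + 1 := by omega
    rcases hp with hp|hp
    · exact Or.inl ⟨h, by omega, by omega, by rw [hp]; exact e0, by rw [hp]; exact e1⟩
    · exact Or.inr (Or.inl ⟨h, by omega, by omega, e0, by rw [hp]; exact e1⟩)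
  · have e0 : w (gpos w k) = 2 := by
      simpa [h, g_one] using blockL hw k 0 (by simp [h, g_one])
    have hl : gpos w (k+1) = gpos w k + 1 := by rw [hlen, h, g_one]; simp
    have hp : p = gpos w k := by omega
    exact Or.inr (Or.inr (Or.inl ⟨h, by omega, by omega, by rw [hp]; exact e0⟩))
  · have e0 : w (gpos w k) = 0 := by
      simpa [h, g_two] using blockL hw k 0 (by simp [h, g_two])
    have e1 : w (gpos w k + 1) = 3 := by
      simpa [h, g_two] using blockL hw k 1 (by simp [h, g_two])
    have e2 : w (gpos w k + 2) = 1 := by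
      simpa [h, g_two] using blockL hw k 2 (by simp [h, g_two])
    have hl : gpos w (k+1) = gpos w k + 3 := by rw [hlen, h, g_two]; simp
    have hp : p = gpos w k ∨ p = gpos w k + 1 ∨ p = gpos w k + 2 := by omega
    rcases hp with hp|hp|hp
    · refine Or.inr (Or.inr (Or.inr (Or.inl ⟨h, by omega, by omega, by rw [hp]; exact e0, ?_, ?_⟩)))
      · rw [hp]; exact e1
      · rw [hp]; exact e2
    · refine Or.inr (Or.inr (Or.inr (Or.inr (Or.inl ⟨h, by omega, by omega, e0, by rw [hp]; exact e1, ?_⟩))))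
      rw [hp, show gpos w k + 1 + 1 = gpos w k + 2 by omega]; exact e2
    · exact Or.inr (Or.inr (Or.inr (Or.inr (Or.inr (Or.inl ⟨h, by omega, by omega, e0, e1, by rw [hp]; exact e2⟩)))))
  · have e0 : w (gpos w k) = 3 := by
      simpa [h, g_big] using blockL hw k 0 (by simp [h, g_big])
    have hl : gpos w (k+1) = gpos w k + 1 := by rw [hlen, h, g_big]; simp
    have hp : p = gpos w k := by omega
    exact Or.inr (Or.inr (Or.inr (Or.inr (Or.inr (Or.inr ⟨h, by omega, by omega, by rw [hp]; exact e0⟩)))))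

lemma blockL0 (hw : IsFixedPointG w) {k : ℕ} {x : ℕ} (h : w k = x) :
    ∀ t, t < (g x).length → w (gpos w k + t) = (g x).getD t 0 := by
  intro t ht
  have := blockL hw k t (by rw [h]; exact ht)
  rwa [h] at this

lemma decode_one (hw : IsFixedPointG w) (k k' : ℕ)
    (h : ∀ s, s < (g (w k)).length → w (gpos w k' + s) = w (gpos w k + s)) :
    w k' = w k := by
  have hw3 := letters hw k
  have hcase : w k = 0 ∨ w k = 1 ∨ w k = 2 ∨ w k = 3 := by omega
  obtain ⟨k₁, H⟩ := master hw (gpos w k')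
  rcases hcase with hc|hc|hc|hc
  · have f0 : w (gpos w k') = 0 := by
      have := (h 0 (by rw [hc, g_zero]; decide)).trans (blockL0 hw hc 0 (by simp [g_zero]))
      simpa [g_zero] using this
    have f1 : w (gpos w k' + 1) = 1 :=
      (h 1 (by rw [hc, g_zero]; decide)).trans (blockL0 hw hc 1 (by simp [g_zero]))
    rw [hc]
    rcases H with ⟨e1,e2,e3,e4,e5⟩|⟨e1,e2,e3,e4,e5⟩|⟨e1,e2,e3,e4⟩|⟨e1,e2,e3,e4,e5,e6⟩|⟨e1,e2,e3,e4,e5,e6⟩|⟨e1,e2,e3,e4,e5,e6⟩|⟨e1,e2,e3,e4⟩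
    · rwa [gpos_inj w e2] at e1
    · have hb1 : gpos w k₁ < gpos w k' := by omega
      have hb2 : gpos w k' < gpos w (k₁+1) := by omega
      exact absurd rfl (notB w hb1 hb2)
    · omega
    · omega
    · omega
    · omega
    · omega
  · have f0 : w (gpos w k') = 2 := by
      have := (h 0 (by rw [hc, g_one]; decide)).trans (blockL0 hw hc 0 (by simp [g_one]))
      simpa [g_one] using this
    rw [hc]
    rcases H with ⟨e1,e2,e3,e4,e5⟩|⟨e1,e2,e3,e4,e5⟩|⟨e1,e2,e3,e4⟩|⟨e1,e2,e3,e4,e5,e6⟩|⟨e1,e2,e3,e4,e5,e6⟩|⟨e1,e2,e3,e4,e5,e6⟩|⟨e1,e2,e3,e4⟩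
    · omega
    · omega
    · rwa [gpos_inj w e2] at e1
    · omega
    · omega
    · omega
    · omega
  · have f0 : w (gpos w k') = 0 := by
      have := (h 0 (by rw [hc, g_two]; decide)).trans (blockL0 hw hc 0 (by simp [g_two]))
      simpa [g_two] using this
    have f1 : w (gpos w k' + 1) = 3 :=
      (h 1 (by rw [hc, g_two]; decide)).trans (blockL0 hw hc 1 (by simp [g_two]))
    rw [hc]
    rcases H with ⟨e1,e2,e3,e4,e5⟩|⟨e1,e2,e3,e4,e5⟩|⟨e1,e2,e3,e4⟩|⟨e1,e2,e3,e4,e5,e6⟩|⟨e1,e2,e3,e4,e5,e6⟩|⟨e1,e2,e3,e4,e5,e6⟩|⟨e1,e2,e3,e4⟩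
    · omega
    · omega
    · omega
    · rwa [gpos_inj w e2] at e1
    · omega
    · omega
    · omega
  · have f0 : w (gpos w k') = 3 := by
      have := (h 0 (by rw [hc, g_big 0]; decide)).trans (blockL0 hw hc 0 (by simp [g_big 0]))
      simpa [show g 3 = [3] from rfl] using this
    rw [hc]
    rcases H with ⟨e1,e2,e3,e4,e5⟩|⟨e1,e2,e3,e4,e5⟩|⟨e1,e2,e3,e4⟩|⟨e1,e2,e3,e4,e5,e6⟩|⟨e1,e2,e3,e4,e5,e6⟩|⟨e1,e2,e3,e4,e5,e6⟩|⟨e1,e2,e3,e4⟩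
    · omega
    · omega
    · omega
    · omega
    · have hb1 : gpos w k₁ < gpos w k' := by omega
      have hb2 : gpos w k' < gpos w (k₁+1) := by omega
      exact absurd rfl (notB w hb1 hb2)
    · omega
    · rwa [gpos_inj w e2] at e1

lemma decode_many (hw : IsFixedPointG w) (m k k' : ℕ)
    (h : ∀ s, gpos w k + s < gpos w (k+m) → w (gpos w k' + s) = w (gpos w k + s)) :
    ∀ t, t ≤ m → (gpos w (k'+t) + gpos w k = gpos w k' + gpos w (k+t)) ∧
      (t < m → w (k'+t) = w (k+t)) := by
  intro t
  induction t with
  | zero =>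
    intro _
    refine ⟨by simp, fun hm => ?_⟩
    have hone : ∀ s, s < (g (w k)).length → w (gpos w k' + s) = w (gpos w k + s) := by
      intro s hs
      apply h
      have h1 : gpos w (k+1) = gpos w k + (g (w k)).length := gpos_succ w k
      have h2 : gpos w (k+1) ≤ gpos w (k+m) := (gpos_mono w).le_iff_le.mpr (by omega)
      omega
    simpa using decode_one hw k k' hone
  | succ t ih =>
    intro ht
    obtain ⟨idt, hlt⟩ := ih (by omega)
    have hwe : w (k'+t) = w (k+t) := hlt (by omega)
    have g1 : gpos w (k'+t+1) = gpos w (k'+t) + (g (w (k'+t))).length := gpos_succ w (k'+t)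
    have g2 : gpos w (k+t+1) = gpos w (k+t) + (g (w (k+t))).length := gpos_succ w (k+t)
    rw [hwe] at g1
    have ea : k' + (t+1) = k'+t+1 := by omega
    have eb : k + (t+1) = k+t+1 := by omega
    rw [ea, eb]
    have idt1 : gpos w (k'+t+1) + gpos w k = gpos w k' + gpos w (k+t+1) := by omega
    refine ⟨idt1, fun hm => ?_⟩
    have hdle : gpos w k ≤ gpos w (k+t+1) := (gpos_mono w).le_iff_le.mpr (by omega)
    apply decode_one hw (k+t+1) (k'+t+1)
    intro s hs
    have hlt2 : gpos w k + ((gpos w (k+t+1) - gpos w k) + s) < gpos w (k+m) := by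
      have h1 : gpos w (k+t+1+1) = gpos w (k+t+1) + (g (w (k+t+1))).length := gpos_succ w (k+t+1)
      have h2 : gpos w (k+t+1+1) ≤ gpos w (k+m) := (gpos_mono w).le_iff_le.mpr (by omega)
      omega
    have := h _ hlt2
    have e1 : gpos w k' + ((gpos w (k+t+1) - gpos w k) + s) = gpos w (k'+t+1) + s := by omega
    have e2 : gpos w k + ((gpos w (k+t+1) - gpos w k) + s) = gpos w (k+t+1) + s := by omega
    rwa [e1, e2] at this

lemma w_pos_ne_zero (hw : IsFixedPointG w) {k : ℕ} {c : ℕ} (hc : w k = c) (h0 : c ≠ 0) : 1 ≤ k := by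
  rcases Nat.eq_zero_or_pos k with h|h
  · rw [h, w_zeroth hw] at hc; omega
  · exact h

lemma sq1 (hw : IsFixedPointG w) : ∀ j, w j ≠ w (j+1) := by
  intro j
  induction j using Nat.strong_induction_on with
  | _ j IH =>
  intro hc
  obtain ⟨k, H⟩ := master hw j
  obtain ⟨k₂, H₂⟩ := master hw (j+1)
  rcases H with ⟨e1,e2,e3,e4,e5⟩|⟨e1,e2,e3,e4,e5⟩|⟨e1,e2,e3,e4⟩|⟨e1,e2,e3,e4,e5,e6⟩|⟨e1,e2,e3,e4,e5,e6⟩|⟨e1,e2,e3,e4,e5,e6⟩|⟨e1,e2,e3,e4⟩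
  · omega
  · rcases H₂ with ⟨f1,f2,f3,f4,f5⟩|⟨f1,f2,f3,f4,f5⟩|⟨f1,f2,f3,f4⟩|⟨f1,f2,f3,f4,f5,f6⟩|⟨f1,f2,f3,f4,f5,f6⟩|⟨f1,f2,f3,f4,f5,f6⟩|⟨f1,f2,f3,f4⟩
    · omega
    · have e : gpos w k₂ = j := by omega
      rw [e] at f4; omega
    · omega
    · omega
    · omega
    · have e : gpos w k₂ + 1 = j := by omega
      rw [e] at f5; omega
    · omega
  · rcases H₂ with ⟨f1,f2,f3,f4,f5⟩|⟨f1,f2,f3,f4,f5⟩|⟨f1,f2,f3,f4⟩|⟨f1,f2,f3,f4,f5,f6⟩|⟨f1,f2,f3,f4,f5,f6⟩|⟨f1,f2,f3,f4,f5,f6⟩|⟨f1,f2,f3,f4⟩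
    · omega
    · omega
    · have hk2 : k₂ = k + 1 := gpos_inj w (by omega)
      rw [hk2] at f1
      have hk1 : 1 ≤ k := w_pos_ne_zero hw e1 (by omega)
      have hkj : k < j := by have := gpos_ge1 hw hk1; omega
      exact IH k hkj (by omega)
    · omega
    · omega
    · omega
    · omega
  · omega
  · omega
  · rcases H₂ with ⟨f1,f2,f3,f4,f5⟩|⟨f1,f2,f3,f4,f5⟩|⟨f1,f2,f3,f4⟩|⟨f1,f2,f3,f4,f5,f6⟩|⟨f1,f2,f3,f4,f5,f6⟩|⟨f1,f2,f3,f4,f5,f6⟩|⟨f1,f2,f3,f4⟩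
    · omega
    · have e : gpos w k₂ = j := by omega
      rw [e] at f4; omega
    · omega
    · omega
    · omega
    · have e : gpos w k₂ + 1 = j := by omega
      rw [e] at f5; omega
    · omega
  · rcases H₂ with ⟨f1,f2,f3,f4,f5⟩|⟨f1,f2,f3,f4,f5⟩|⟨f1,f2,f3,f4⟩|⟨f1,f2,f3,f4,f5,f6⟩|⟨f1,f2,f3,f4,f5,f6⟩|⟨f1,f2,f3,f4,f5,f6⟩|⟨f1,f2,f3,f4⟩
    · omega
    · omega
    · omega
    · omega
    · have hk2 : k₂ = k := gpos_inj w (by omega)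
      rw [hk2] at f1; omega
    · omega
    · have hk2 : k₂ = k + 1 := gpos_inj w (by omega)
      rw [hk2] at f1
      have hk1 : 1 ≤ k := w_pos_ne_zero hw e1 (by omega)
      have hkj : k < j := by have := gpos_ge1 hw hk1; omega
      exact IH k hkj (by omega)

lemma sq2 (hw : IsFixedPointG w) : ∀ j, ¬ (w j = w (j+2) ∧ w (j+1) = w (j+3)) := by
  intro j
  induction j using Nat.strong_induction_on with
  | _ j IH =>
  rintro ⟨hq, hq2⟩
  have hab : w j ≠ w (j+1) := sq1 hw j
  have hbc : w (j+1) ≠ w (j+2) := sq1 hw (j+1)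
  have hcd : w (j+2) ≠ w (j+3) := sq1 hw (j+2)
  obtain ⟨k, H⟩ := master hw j
  rcases H with ⟨e1,e2,e3,e4,e5⟩|⟨e1,e2,e3,e4,e5⟩|⟨e1,e2,e3,e4⟩|⟨e1,e2,e3,e4,e5,e6⟩|⟨e1,e2,e3,e4,e5,e6⟩|⟨e1,e2,e3,e4,e5,e6⟩|⟨e1,e2,e3,e4⟩
  · -- w j = 0, block 01 at j, w (j+1) = 1
    obtain ⟨k₃, H₂⟩ := master hw (j+2)
    rw [show j+2+1 = j+3 by omega, show j+2+2 = j+4 by omega] at H₂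
    rcases H₂ with ⟨g1,g2,g3,g4,g5⟩|⟨g1,g2,g3,g4,g5⟩|⟨g1,g2,g3,g4⟩|⟨g1,g2,g3,g4,g5,g6⟩|⟨g1,g2,g3,g4,g5,g6⟩|⟨g1,g2,g3,g4,g5,g6⟩|⟨g1,g2,g3,g4⟩
    · have hk : k₃ = k + 1 := gpos_inj w (by omega)
      rw [hk] at g1
      exact sq1 hw k (by omega)
    · omega
    · omega
    · omega
    · omega
    · omega
    · omega
  · -- w j = 1, block 01 at j-1: w k = 0, gpos k + 1 = j, gpos (k+1) = j+1
    obtain ⟨k₂, H₂⟩ := master hw (j+1)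
    rw [show j+1+1 = j+2 by omega, show j+1+2 = j+3 by omega] at H₂
    rcases H₂ with ⟨f1,f2,f3,f4,f5⟩|⟨f1,f2,f3,f4,f5⟩|⟨f1,f2,f3,f4⟩|⟨f1,f2,f3,f4,f5,f6⟩|⟨f1,f2,f3,f4,f5,f6⟩|⟨f1,f2,f3,f4,f5,f6⟩|⟨f1,f2,f3,f4⟩
    · -- w(j+1) = 0 block01: k₂ = k+1, w(k+1) = 0 = w k: sq1
      have hk : k₂ = k + 1 := gpos_inj w (by omega)
      rw [hk] at f1
      exact sq1 hw k (by omega)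
    · have e : gpos w k₂ = j := by omega
      rw [e] at f4; omega
    · -- w(j+1) = 2: boundary at j+2 with letter 1
      have hk : k₂ = k + 1 := gpos_inj w (by omega)
      obtain ⟨k₃, H₃⟩ := master hw (j+2)
      rw [show j+2+1 = j+3 by omega, show j+2+2 = j+4 by omega] at H₃
      rcases H₃ with ⟨g1,g2,g3,g4,g5⟩|⟨g1,g2,g3,g4,g5⟩|⟨g1,g2,g3,g4⟩|⟨g1,g2,g3,g4,g5,g6⟩|⟨g1,g2,g3,g4,g5,g6⟩|⟨g1,g2,g3,g4,g5,g6⟩|⟨g1,g2,g3,g4⟩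
      · omega
      · have hk3 : k₃ = k₂ := gpos_inj w (by omega)
        rw [hk3] at g1; omega
      · omega
      · omega
      · omega
      · exact @notB w k₃ (j+1) k₂ (by omega) (by omega) f2
      · omega
    · omega
    · have e : gpos w k₂ = j := by omega
      rw [e] at f4; omega
    · have e : gpos w k₂ + 1 = j := by omega
      rw [e] at f5; omega
    · -- w(j+1) = 3 boundary: then j+2 boundary with letter 1
      have hk : k₂ = k + 1 := gpos_inj w (by omega)
      obtain ⟨k₃, H₃⟩ := master hw (j+2)
      rw [show j+2+1 = j+3 by omega, show j+2+2 = j+4 by omega] at H₃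
      rcases H₃ with ⟨g1,g2,g3,g4,g5⟩|⟨g1,g2,g3,g4,g5⟩|⟨g1,g2,g3,g4⟩|⟨g1,g2,g3,g4,g5,g6⟩|⟨g1,g2,g3,g4,g5,g6⟩|⟨g1,g2,g3,g4,g5,g6⟩|⟨g1,g2,g3,g4⟩
      · omega
      · have hk3 : k₃ = k₂ := gpos_inj w (by omega)
        rw [hk3] at g1; omega
      · omega
      · omega
      · omega
      · exact @notB w k₃ (j+1) k₂ (by omega) (by omega) f2
      · omega
  · -- w j = 2: k: gpos k = j, w k = 1, gpos (k+1) = j+1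
    obtain ⟨k₂, H₂⟩ := master hw (j+1)
    rw [show j+1+1 = j+2 by omega, show j+1+2 = j+3 by omega] at H₂
    rcases H₂ with ⟨f1,f2,f3,f4,f5⟩|⟨f1,f2,f3,f4,f5⟩|⟨f1,f2,f3,f4⟩|⟨f1,f2,f3,f4,f5,f6⟩|⟨f1,f2,f3,f4,f5,f6⟩|⟨f1,f2,f3,f4,f5,f6⟩|⟨f1,f2,f3,f4⟩
    · omega
    · have e : gpos w k₂ = j := by omega
      rw [e] at f4; omega
    · omega
    · omega
    · have e : gpos w k₂ = j := by omega
      rw [e] at f4; omega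
    · have e : gpos w k₂ + 1 = j := by omega
      rw [e] at f5; omega
    · -- 2 3 2 3
      have hk : k₂ = k + 1 := gpos_inj w (by omega)
      obtain ⟨k₃, H₃⟩ := master hw (j+2)
      rw [show j+2+1 = j+3 by omega, show j+2+2 = j+4 by omega] at H₃
      rcases H₃ with ⟨g1,g2,g3,g4,g5⟩|⟨g1,g2,g3,g4,g5⟩|⟨g1,g2,g3,g4⟩|⟨g1,g2,g3,g4,g5,g6⟩|⟨g1,g2,g3,g4,g5,g6⟩|⟨g1,g2,g3,g4,g5,g6⟩|⟨g1,g2,g3,g4⟩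
      · omega
      · omega
      · -- w(j+2) = 2: k₃ = k+2
        have hk3 : k₃ = k₂ + 1 := gpos_inj w (by omega)
        obtain ⟨k₄, H₄⟩ := master hw (j+3)
        rw [show j+3+1 = j+4 by omega, show j+3+2 = j+5 by omega] at H₄
        rcases H₄ with ⟨i1,i2,i3,i4,i5⟩|⟨i1,i2,i3,i4,i5⟩|⟨i1,i2,i3,i4⟩|⟨i1,i2,i3,i4,i5,i6⟩|⟨i1,i2,i3,i4,i5,i6⟩|⟨i1,i2,i3,i4,i5,i6⟩|⟨i1,i2,i3,i4⟩
        · omega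
        · omega
        · omega
        · omega
        · have hk4 : k₄ = k₃ := gpos_inj w (by omega)
          rw [hk4] at i1; omega
        · omega
        · -- pattern 1 3 1 3 at k
          have hk4 : k₄ = k₃ + 1 := gpos_inj w (by omega)
          have hk1 : 1 ≤ k := w_pos_ne_zero hw e1 (by omega)
          have hkj : k < j := by have := gpos_ge1 hw hk1; omega
          have hA : k₃ = k + 2 := by omega
          have hB : k₄ = k + 3 := by omega
          rw [hA] at g1
          rw [hB] at i1
          rw [hk] at f1
          exact IH k hkj ⟨by omega, by omega⟩
      · omega
      · omega
      · omega
      · omega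
  · omega
  · -- w j = 3 nonboundary: w k = 2, gpos k + 1 = j, gpos (k+1) = j+2, w (j+1) = 1
    obtain ⟨k₃, H₃⟩ := master hw (j+2)
    rw [show j+2+1 = j+3 by omega, show j+2+2 = j+4 by omega] at H₃
    rcases H₃ with ⟨g1,g2,g3,g4,g5⟩|⟨g1,g2,g3,g4,g5⟩|⟨g1,g2,g3,g4⟩|⟨g1,g2,g3,g4,g5,g6⟩|⟨g1,g2,g3,g4,g5,g6⟩|⟨g1,g2,g3,g4,g5,g6⟩|⟨g1,g2,g3,g4⟩
    · omega
    · omega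
    · omega
    · omega
    · exact @notB w k (j+1) k₃ (by omega) (by omega) (by omega)
    · exact @notB w k j k₃ (by omega) (by omega) (by omega)
    · -- boundary at j+2 with block 3: then j+3 boundary letter 1
      obtain ⟨k₄, H₄⟩ := master hw (j+3)
      rw [show j+3+1 = j+4 by omega, show j+3+2 = j+5 by omega] at H₄
      rcases H₄ with ⟨i1,i2,i3,i4,i5⟩|⟨i1,i2,i3,i4,i5⟩|⟨i1,i2,i3,i4⟩|⟨i1,i2,i3,i4,i5,i6⟩|⟨i1,i2,i3,i4,i5,i6⟩|⟨i1,i2,i3,i4,i5,i6⟩|⟨i1,i2,i3,i4⟩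
      · omega
      · have hk4 : k₄ = k₃ := gpos_inj w (by omega)
        rw [hk4] at i1; omega
      · omega
      · omega
      · omega
      · exact @notB w k (j+1) k₄ (by omega) (by omega) (by omega)
      · omega
  · -- w j = 1 via 031 block: w k = 2, gpos k + 2 = j, gpos (k+1) = j+1
    obtain ⟨k₂, H₂⟩ := master hw (j+1)
    rw [show j+1+1 = j+2 by omega, show j+1+2 = j+3 by omega] at H₂
    rcases H₂ with ⟨f1,f2,f3,f4,f5⟩|⟨f1,f2,f3,f4,f5⟩|⟨f1,f2,f3,f4⟩|⟨f1,f2,f3,f4,f5,f6⟩|⟨f1,f2,f3,f4,f5,f6⟩|⟨f1,f2,f3,f4,f5,f6⟩|⟨f1,f2,f3,f4⟩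
    · -- w(j+1) = 0 block01 at j+1: k₂ = k+1, gpos (k+2) = j+3
      have hk : k₂ = k + 1 := gpos_inj w (by omega)
      obtain ⟨k₄, H₄⟩ := master hw (j+3)
      rw [show j+3+1 = j+4 by omega, show j+3+2 = j+5 by omega] at H₄
      rcases H₄ with ⟨i1,i2,i3,i4,i5⟩|⟨i1,i2,i3,i4,i5⟩|⟨i1,i2,i3,i4⟩|⟨i1,i2,i3,i4,i5,i6⟩|⟨i1,i2,i3,i4,i5,i6⟩|⟨i1,i2,i3,i4,i5,i6⟩|⟨i1,i2,i3,i4⟩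
      · -- w (k+2) = 0 = w(k+1): sq1
        have hk4 : k₄ = k₂ + 1 := gpos_inj w (by omega)
        have hk4' : k₄ = k + 2 := by omega
        rw [hk4'] at i1
        rw [hk] at f1
        have hs := sq1 hw (k+1)
        rw [show k+1+1 = k+2 by omega] at hs
        omega
      · omega
      · omega
      · -- w (k+2) = 2 : pattern 2 0 2 at k
        have hk4 : k₄ = k₂ + 1 := gpos_inj w (by omega)
        have hk4' : k₄ = k + 2 := by omega
        rw [hk4'] at i1
        rw [hk] at f1
        -- w k = 2, w (k+1) = 0, w (k+2) = 2
        obtain ⟨k₅, H₅⟩ := master hw (k+1)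
        rw [show k+1+1 = k+2 by omega, show k+1+2 = k+3 by omega] at H₅
        rcases H₅ with ⟨m1,m2,m3,m4,m5⟩|⟨m1,m2,m3,m4,m5⟩|⟨m1,m2,m3,m4⟩|⟨m1,m2,m3,m4,m5,m6⟩|⟨m1,m2,m3,m4,m5,m6⟩|⟨m1,m2,m3,m4,m5,m6⟩|⟨m1,m2,m3,m4⟩
        · omega
        · omega
        · omega
        · omega
        · omega
        · omega
        · omega
      · omega
      · omega
      · omega
    · have e : gpos w k₂ = j := by omega
      rw [e] at f4; omega
    · -- w(j+1) = 2: j+2 boundary letter 1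
      have hk : k₂ = k + 1 := gpos_inj w (by omega)
      obtain ⟨k₃, H₃⟩ := master hw (j+2)
      rw [show j+2+1 = j+3 by omega, show j+2+2 = j+4 by omega] at H₃
      rcases H₃ with ⟨g1,g2,g3,g4,g5⟩|⟨g1,g2,g3,g4,g5⟩|⟨g1,g2,g3,g4⟩|⟨g1,g2,g3,g4,g5,g6⟩|⟨g1,g2,g3,g4,g5,g6⟩|⟨g1,g2,g3,g4,g5,g6⟩|⟨g1,g2,g3,g4⟩
      · omega
      · have hk3 : k₃ = k₂ := gpos_inj w (by omega)
        rw [hk3] at g1; omega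
      · omega
      · omega
      · omega
      · exact @notB w k₃ (j+1) k₂ (by omega) (by omega) f2
      · omega
    · omega
    · have e : gpos w k₂ = j := by omega
      rw [e] at f4; omega
    · have e : gpos w k₂ + 1 = j := by omega
      rw [e] at f5; omega
    · -- w(j+1) = 3 boundary: j+2 boundary letter 1
      have hk : k₂ = k + 1 := gpos_inj w (by omega)
      obtain ⟨k₃, H₃⟩ := master hw (j+2)
      rw [show j+2+1 = j+3 by omega, show j+2+2 = j+4 by omega] at H₃
      rcases H₃ with ⟨g1,g2,g3,g4,g5⟩|⟨g1,g2,g3,g4,g5⟩|⟨g1,g2,g3,g4⟩|⟨g1,g2,g3,g4,g5,g6⟩|⟨g1,g2,g3,g4,g5,g6⟩|⟨g1,g2,g3,g4,g5,g6⟩|⟨g1,g2,g3,g4⟩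
      · omega
      · have hk3 : k₃ = k₂ := gpos_inj w (by omega)
        rw [hk3] at g1; omega
      · omega
      · omega
      · omega
      · exact @notB w k₃ (j+1) k₂ (by omega) (by omega) f2
      · omega
  · -- w j = 3 boundary: k: gpos k = j, w k = 3, gpos (k+1) = j+1
    obtain ⟨k₂, H₂⟩ := master hw (j+1)
    rw [show j+1+1 = j+2 by omega, show j+1+2 = j+3 by omega] at H₂
    rcases H₂ with ⟨f1,f2,f3,f4,f5⟩|⟨f1,f2,f3,f4,f5⟩|⟨f1,f2,f3,f4⟩|⟨f1,f2,f3,f4,f5,f6⟩|⟨f1,f2,f3,f4,f5,f6⟩|⟨f1,f2,f3,f4,f5,f6⟩|⟨f1,f2,f3,f4⟩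
    · omega
    · have e : gpos w k₂ = j := by omega
      rw [e] at f4; omega
    · -- w(j+1) = 2: 3 2 3 2
      have hk : k₂ = k + 1 := gpos_inj w (by omega)
      obtain ⟨k₃, H₃⟩ := master hw (j+2)
      rw [show j+2+1 = j+3 by omega, show j+2+2 = j+4 by omega] at H₃
      rcases H₃ with ⟨g1,g2,g3,g4,g5⟩|⟨g1,g2,g3,g4,g5⟩|⟨g1,g2,g3,g4⟩|⟨g1,g2,g3,g4,g5,g6⟩|⟨g1,g2,g3,g4,g5,g6⟩|⟨g1,g2,g3,g4,g5,g6⟩|⟨g1,g2,g3,g4⟩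
      · omega
      · omega
      · omega
      · omega
      · have hk3 : k₃ = k₂ := gpos_inj w (by omega)
        rw [hk3] at g1; omega
      · omega
      · have hk3 : k₃ = k₂ + 1 := gpos_inj w (by omega)
        obtain ⟨k₄, H₄⟩ := master hw (j+3)
        rw [show j+3+1 = j+4 by omega, show j+3+2 = j+5 by omega] at H₄
        rcases H₄ with ⟨i1,i2,i3,i4,i5⟩|⟨i1,i2,i3,i4,i5⟩|⟨i1,i2,i3,i4⟩|⟨i1,i2,i3,i4,i5,i6⟩|⟨i1,i2,i3,i4,i5,i6⟩|⟨i1,i2,i3,i4,i5,i6⟩|⟨i1,i2,i3,i4⟩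
        · omega
        · have hk4 : k₄ = k₃ := gpos_inj w (by omega)
          rw [hk4] at i1; omega
        · -- pattern 3 1 3 1 at k
          have hk4 : k₄ = k₃ + 1 := gpos_inj w (by omega)
          have hk1 : 1 ≤ k := w_pos_ne_zero hw e1 (by omega)
          have hkj : k < j := by have := gpos_ge1 hw hk1; omega
          have hA : k₃ = k + 2 := by omega
          have hB : k₄ = k + 3 := by omega
          rw [hA] at g1
          rw [hB] at i1
          rw [hk] at f1
          exact IH k hkj ⟨by omega, by omega⟩
        · omega
        · omega
        · omega
        · omega
    · omega
    · have e : gpos w k₂ = j := by omega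
      rw [e] at f4; omega
    · exact @notB w k₂ j k (by omega) (by omega) e2
    · omega

lemma g_three : g 3 = [3] := rfl

def Per (w : ℕ → ℕ) (n i : ℕ) : Prop := ∀ t, t < n → w (i+t) = w (i+n+t)

lemma perOf (w : ℕ → ℕ) {k K m : ℕ} (hK : K = k + m) (hm : 1 ≤ m)
    (h1 : ∀ t, t < m - 1 → w (K+1+t) = w (k+1+t)) (h2 : w (K + m) = w K) :
    Per w m (k+1) := by
  intro t ht
  by_cases hL : t < m-1
  · have hx := h1 t hL
    rw [show K+1+t = k+1+m+t by omega] at hx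
    exact hx.symm
  · have ht' : t = m-1 := by omega
    subst ht'
    rw [show k+1+(m-1) = K by omega, show k+1+m+(m-1) = K+m by omega]
    exact h2.symm

lemma ext_step {w : ℕ → ℕ} {n i : ℕ} (hp : Per w n i) (hi : 1 ≤ i)
    (h0 : w (i-1) = w (i-1+n)) : Per w n (i-1) := by
  intro t ht
  rcases t with _ | t'
  · simpa using h0
  · have hx := hp t' (by omega)
    rw [show i-1+(t'+1) = i + t' by omega, show i-1+n+(t'+1) = i+n+t' by omega]
    exact hx

lemma caseA (hw : IsFixedPointG w) {n i : ℕ} (hn : 3 ≤ n) (hp : Per w n i)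
    (IHn : ∀ m, m < n → 1 ≤ m → ∀ j, ¬ Per w m j)
    (k : ℕ) (ek : gpos w k = i)
    (hcl : w i = 0 ∨ w i = 2 ∨ (w i = 3 ∧ gpos w (k+1) = i+1)) : False := by
  have hp0 : w i = w (i+n) := by have := hp 0 (by omega); simpa using this
  have hp1 : w (i+1) = w (i+n+1) := hp 1 (by omega)
  have hK : ∃ K, gpos w K = i + n := by
    obtain ⟨k₂, H₂⟩ := master hw (i+n)
    rcases hcl with h0|h2|⟨h3, hb1⟩
    · rcases H₂ with ⟨f1,f2,f3,f4,f5⟩|⟨f1,f2,f3,f4,f5⟩|⟨f1,f2,f3,f4⟩|⟨f1,f2,f3,f4,f5,f6⟩|⟨f1,f2,f3,f4,f5,f6⟩|⟨f1,f2,f3,f4,f5,f6⟩|⟨f1,f2,f3,f4⟩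
      · exact ⟨k₂, f2⟩
      · omega
      · omega
      · exact ⟨k₂, f2⟩
      · omega
      · omega
      · omega
    · rcases H₂ with ⟨f1,f2,f3,f4,f5⟩|⟨f1,f2,f3,f4,f5⟩|⟨f1,f2,f3,f4⟩|⟨f1,f2,f3,f4,f5,f6⟩|⟨f1,f2,f3,f4,f5,f6⟩|⟨f1,f2,f3,f4,f5,f6⟩|⟨f1,f2,f3,f4⟩
      · omega
      · omega
      · exact ⟨k₂, f2⟩
      · omega
      · omega
      · omega
      · omega
    · rcases H₂ with ⟨f1,f2,f3,f4,f5⟩|⟨f1,f2,f3,f4,f5⟩|⟨f1,f2,f3,f4⟩|⟨f1,f2,f3,f4,f5,f6⟩|⟨f1,f2,f3,f4,f5,f6⟩|⟨f1,f2,f3,f4,f5,f6⟩|⟨f1,f2,f3,f4⟩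
      · omega
      · omega
      · omega
      · omega
      · -- 3 nonboundary at i+n: w (i+n+1) = 1, so w (i+1) = 1 at boundary i+1
        exfalso
        have hw1 : w (i+1) = 1 := by omega
        obtain ⟨k₃, H₃⟩ := master hw (i+1)
        rcases H₃ with ⟨g1,g2,g3,g4,g5⟩|⟨g1,g2,g3,g4,g5⟩|⟨g1,g2,g3,g4⟩|⟨g1,g2,g3,g4,g5,g6⟩|⟨g1,g2,g3,g4,g5,g6⟩|⟨g1,g2,g3,g4,g5,g6⟩|⟨g1,g2,g3,g4⟩
        · omega
        · have e : gpos w k₃ = i := by omega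
          rw [e] at g4; omega
        · omega
        · omega
        · omega
        · exact @notB w k₃ i k (by omega) (by omega) ek
        · omega
      · omega
      · exact ⟨k₂, f2⟩
  obtain ⟨K, eK⟩ := hK
  have hkK : k < K := (gpos_mono w).lt_iff_lt.mp (by omega)
  set m := K - k with hm
  have hKm : K = k + m := by omega
  have hdec := decode_many hw m k K (by
    intro s hs
    have hg : gpos w (k+m) = i + n := by rw [show k + m = K by omega]; exact eK
    have hs' : s < n := by omega
    have hh := hp s hs'
    show w (gpos w K + s) = w (gpos w k + s)
    rw [eK, ek]
    exact hh.symm)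
  have hsq : Per w m k := by
    intro t ht
    have hx := (hdec t (le_of_lt ht)).2 ht
    rw [show k+m+t = K+t by omega]
    exact hx.symm
  have hmn : m ≤ n := by
    have h1 := gpos_add_ge w k m
    have hg : gpos w (k+m) = i + n := by rw [show k + m = K by omega]; exact eK
    omega
  by_cases hlt : m < n
  · exact IHn m hlt (by omega) k hsq
  · -- m = n: all blocks length 1, letters in {2,3}
    have hmeq : m = n := by omega
    have hup : ∀ t, t ≤ n → gpos w (k+t) = i+t := by
      intro t ht
      have h1 := gpos_add_ge w k t
      have h2 := gpos_add_ge w (k+t) (n-t)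
      rw [show k+t+(n-t) = k+m by omega] at h2
      have h3 : gpos w (k+m) = i + n := by rw [show k + m = K by omega]; exact eK
      omega
    have hlet : ∀ t, t < n → w (i+t) = 2 ∨ w (i+t) = 3 := by
      intro t ht
      have h1 : gpos w (k+t) = i+t := hup t (by omega)
      have h2 : gpos w (k+t+1) = i+t+1 := by
        have h := hup (t+1) (by omega)
        rw [show k+(t+1) = k+t+1 by omega] at h
        omega
      have hlen := gpos_succ w (k+t)
      have hl3 := letters hw (k+t)
      have hb := blockL hw (k+t) 0 (g_len_pos _)
      simp only [Nat.add_zero] at hb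
      rw [h1] at hb
      have hcase : w (k+t) = 0 ∨ w (k+t) = 1 ∨ w (k+t) = 2 ∨ w (k+t) = 3 := by omega
      rcases hcase with hc|hc|hc|hc
      · rw [hc, g_zero] at hlen; simp at hlen; omega
      · rw [hc, g_one] at hb; left; simpa using hb
      · rw [hc, g_two] at hlen; simp at hlen; omega
      · rw [hc, g_three] at hb; right; simpa using hb
    have A0 : w i = 2 ∨ w i = 3 := by have := hlet 0 (by omega); simpa using this
    have A1 := hlet 1 (by omega)
    have A2 := hlet 2 (by omega)
    have A3 : w (i+3) = 2 ∨ w (i+3) = 3 := by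
      by_cases h3 : n = 3
      · have hx := hp 0 (by omega)
        simp only [Nat.add_zero] at hx
        rw [show i+n = i+3 by omega] at hx
        omega
      · exact hlet 3 (by omega)
    have s0 := sq1 hw i
    have s1 := sq1 hw (i+1)
    rw [show i+1+1 = i+2 by omega] at s1
    have s2 := sq1 hw (i+2)
    rw [show i+2+1 = i+3 by omega] at s2
    have q := sq2 hw i
    rcases A0 with h|h <;> rcases A1 with h1|h1 <;> rcases A2 with h2|h2 <;>
      rcases A3 with h3|h3 <;> exact q ⟨by omega, by omega⟩

lemma caseB1 (hw : IsFixedPointG w) {n i k k₂ : ℕ} (hn : 3 ≤ n) (hp : Per w n i)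
    (IHn : ∀ m, m < n → 1 ≤ m → ∀ j, ¬ Per w m j)
    (e3 : gpos w (k+1) = i+1)
    (f1 : w k₂ = 2) (f2 : gpos w k₂ + 2 = i + n) (f3 : gpos w (k₂+1) = i+n+1)
    (f4 : w (gpos w k₂) = 0) (f5 : w (gpos w k₂ + 1) = 3) : False := by
  have hkk : k + 1 ≤ k₂ := by
    have := (gpos_mono w).le_iff_le.mp (show gpos w (k+1) ≤ gpos w k₂ by omega)
    omega
  set m := k₂ - k with hm
  have hk₂ : k₂ = k + m := by omega
  have hm1 : 1 ≤ m := by omega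
  have hdec := decode_many hw (m-1) (k+1) (k₂+1) (by
    intro s hs
    have hb : gpos w (k+1+(m-1)) = gpos w k₂ := by rw [show k+1+(m-1) = k₂ by omega]
    have hs' : s + 1 < n := by omega
    have hh := hp (s+1) hs'
    show w (gpos w (k₂+1) + s) = w (gpos w (k+1) + s)
    rw [f3, e3, show i+n+1+s = i+n+(s+1) by omega, show i+1+s = i+(s+1) by omega]
    exact hh.symm)
  have hid := (hdec (m-1) (le_refl _)).1
  rw [show k₂+1+(m-1) = k₂+m by omega, show k+1+(m-1) = k₂ by omega] at hid
  have hend : gpos w (k₂+m) = i+2*n-2 := by omega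
  -- letters at the end of the second copy
  have hA : w (i+2*n-2) = 0 := by
    have hx := hp (n-2) (by omega)
    rw [show i+(n-2) = i+n-2 by omega, show i+n+(n-2) = i+2*n-2 by omega] at hx
    rw [show gpos w k₂ = i+n-2 by omega] at f4
    omega
  have hB : w (i+2*n-1) = 3 := by
    have hx := hp (n-1) (by omega)
    rw [show i+(n-1) = i+n-1 by omega, show i+n+(n-1) = i+2*n-1 by omega] at hx
    rw [show gpos w k₂ + 1 = i+n-1 by omega] at f5
    omega
  obtain ⟨k₄, H₄⟩ := master hw (i+2*n-2)
  rw [show i+2*n-2+1 = i+2*n-1 by omega, show i+2*n-2+2 = i+2*n by omega] at H₄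
  rcases H₄ with ⟨i1,i2,i3,i4,i5⟩|⟨i1,i2,i3,i4,i5⟩|⟨i1,i2,i3,i4⟩|⟨i1,i2,i3,i4,i5,i6⟩|⟨i1,i2,i3,i4,i5,i6⟩|⟨i1,i2,i3,i4,i5,i6⟩|⟨i1,i2,i3,i4⟩
  · omega
  · omega
  · omega
  · -- w (k₂+m) = 2
    have hk4 : k₄ = k₂ + m := gpos_inj w (by omega)
    rw [hk4] at i1
    have hper : Per w m (k+1) := perOf w hk₂ hm1
      (fun t htl => (hdec t (by omega)).2 (by omega)) (by omega)
    have hmb : m ≤ n - 2 := by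
      have h1 := gpos_add_ge w (k+1) (m-1)
      rw [show k+1+(m-1) = k₂ by omega] at h1
      omega
    exact IHn m (by omega) hm1 (k+1) hper
  · omega
  · omega
  · omega

lemma caseB2 (hw : IsFixedPointG w) {n i k k₂ : ℕ} (hn : 3 ≤ n) (hp : Per w n i)
    (IHn : ∀ m, m < n → 1 ≤ m → ∀ j, ¬ Per w m j)
    (e1 : w k = 2) (e3 : gpos w (k+1) = i+1)
    (f1 : w k₂ = 0) (f2 : gpos w k₂ + 1 = i + n) (f3 : gpos w (k₂+1) = i+n+1)
    (f4 : w (gpos w k₂) = 0) : False := by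
  have hkk : k + 1 ≤ k₂ := by
    have := (gpos_mono w).le_iff_le.mp (show gpos w (k+1) ≤ gpos w k₂ by omega)
    omega
  set m := k₂ - k with hm
  have hk₂ : k₂ = k + m := by omega
  have hm1 : 1 ≤ m := by omega
  have hdec := decode_many hw (m-1) (k+1) (k₂+1) (by
    intro s hs
    have hb : gpos w (k+1+(m-1)) = gpos w k₂ := by rw [show k+1+(m-1) = k₂ by omega]
    have hs' : s + 1 < n := by omega
    have hh := hp (s+1) hs'
    show w (gpos w (k₂+1) + s) = w (gpos w (k+1) + s)
    rw [f3, e3, show i+n+1+s = i+n+(s+1) by omega, show i+1+s = i+(s+1) by omega]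
    exact hh.symm)
  have hid := (hdec (m-1) (le_refl _)).1
  rw [show k₂+1+(m-1) = k₂+m by omega, show k+1+(m-1) = k₂ by omega] at hid
  have hend : gpos w (k₂+m) = i+2*n-1 := by omega
  have hA : w (i+2*n-1) = 0 := by
    have hx := hp (n-1) (by omega)
    rw [show i+(n-1) = i+n-1 by omega, show i+n+(n-1) = i+2*n-1 by omega] at hx
    rw [show gpos w k₂ = i+n-1 by omega] at f4
    omega
  obtain ⟨k₄, H₄⟩ := master hw (i+2*n-1)
  rw [show i+2*n-1+1 = i+2*n by omega, show i+2*n-1+2 = i+2*n+1 by omega] at H₄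
  rcases H₄ with ⟨i1,i2,i3,i4,i5⟩|⟨i1,i2,i3,i4,i5⟩|⟨i1,i2,i3,i4⟩|⟨i1,i2,i3,i4,i5,i6⟩|⟨i1,i2,i3,i4,i5,i6⟩|⟨i1,i2,i3,i4,i5,i6⟩|⟨i1,i2,i3,i4⟩
  · -- w (k₂+m) = 0 : genuine square
    have hk4 : k₄ = k₂ + m := gpos_inj w (by omega)
    rw [hk4] at i1
    have hper : Per w m (k+1) := perOf w hk₂ hm1
      (fun t htl => (hdec t (by omega)).2 (by omega)) (by omega)
    have hmb : m ≤ n - 1 := by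
      have h1 := gpos_add_ge w (k+1) (m-1)
      rw [show k+1+(m-1) = k₂ by omega] at h1
      omega
    exact IHn m (by omega) hm1 (k+1) hper
  · omega
  · omega
  · -- w (k₂+m) = 2 : stubborn core
    have hk4 : k₄ = k₂ + m := gpos_inj w (by omega)
    rw [hk4] at i1
    by_cases hm2 : m = 1
    · -- 2 0 2 at k
      have hc1 : w (k+1) = 0 := by rw [show k+1 = k₂ by omega]; exact f1
      have hc2 : w (k+2) = 2 := by rw [show k+2 = k₂+m by omega]; exact i1
      obtain ⟨k₅, H₅⟩ := master hw (k+1)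
      rw [show k+1+1 = k+2 by omega, show k+1+2 = k+3 by omega] at H₅
      rcases H₅ with ⟨m1,m2,m3,m4,m5⟩|⟨m1,m2,m3,m4,m5⟩|⟨m1,m2,m3,m4⟩|⟨m1,m2,m3,m4,m5,m6⟩|⟨m1,m2,m3,m4,m5,m6⟩|⟨m1,m2,m3,m4,m5,m6⟩|⟨m1,m2,m3,m4⟩ <;> omega
    · have hm2' : 2 ≤ m := by omega
      have hd0 := (hdec 0 (by omega)).2 (by omega)
      simp only [Nat.add_zero] at hd0
      rw [show k₂+1 = k+m+1 by omega] at hd0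
      -- hd0 : w (k+m+1) = w (k+1)
      obtain ⟨κ, Hκ⟩ := master hw k
      rcases Hκ with ⟨m1,m2,m3,m4,m5⟩|⟨m1,m2,m3,m4,m5⟩|⟨m1,m2,m3,m4⟩|⟨m1,m2,m3,m4,m5,m6⟩|⟨m1,m2,m3,m4,m5,m6⟩|⟨m1,m2,m3,m4,m5,m6⟩|⟨m1,m2,m3,m4⟩
      · omega
      · omega
      · -- m1 : w κ = 1, m2 : gpos κ = k, m3 : gpos (κ+1) = k+1
        have f1' : w (k+m) = 0 := by rw [show k+m = k₂ by omega]; exact f1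
        obtain ⟨k₅, H₅⟩ := master hw (k+m)
        rw [show k+m+1 = k+m+1 by omega, show k+m+2 = k+m+2 by omega] at H₅
        rcases H₅ with ⟨p1,p2,p3,p4,p5⟩|⟨p1,p2,p3,p4,p5⟩|⟨p1,p2,p3,p4⟩|⟨p1,p2,p3,p4,p5,p6⟩|⟨p1,p2,p3,p4,p5,p6⟩|⟨p1,p2,p3,p4,p5,p6⟩|⟨p1,p2,p3,p4⟩
        · -- w (k+m+1) = 1 hence w (k+1) = 1 : impossible after a 2-block
          have ha1 : w (k+1) = 1 := by omega
          obtain ⟨k₆, H₆⟩ := master hw (k+1)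
          rw [show k+1+1 = k+2 by omega, show k+1+2 = k+3 by omega] at H₆
          rcases H₆ with ⟨q1,q2,q3,q4,q5⟩|⟨q1,q2,q3,q4,q5⟩|⟨q1,q2,q3,q4⟩|⟨q1,q2,q3,q4,q5,q6⟩|⟨q1,q2,q3,q4,q5,q6⟩|⟨q1,q2,q3,q4,q5,q6⟩|⟨q1,q2,q3,q4⟩
          · omega
          · have hk6 : k₆ = κ := gpos_inj w (by omega)
            rw [hk6] at q1; omega
          · omega
          · omega
          · omega
          · exact @notB w k₆ k κ (by omega) (by omega) m2
          · omega
        · omega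
        · omega
        · -- w (k+m+1) = 3, w (k+m+2) = 1
          have ha1 : w (k+1) = 3 := by omega
          by_cases hmm : m = 2
          · have hx : k+m+2 = k₂+m := by omega
            rw [hx] at p6
            omega
          · have hd1 := (hdec 1 (by omega)).2 (by omega)
            rw [show k₂+1+1 = k+m+2 by omega, show k+1+1 = k+2 by omega] at hd1
            have ha2 : w (k+2) = 1 := by omega
            obtain ⟨k₆, H₆⟩ := master hw (k+1)
            rw [show k+1+1 = k+2 by omega, show k+1+2 = k+3 by omega] at H₆
            rcases H₆ with ⟨q1,q2,q3,q4,q5⟩|⟨q1,q2,q3,q4,q5⟩|⟨q1,q2,q3,q4⟩|⟨q1,q2,q3,q4,q5,q6⟩|⟨q1,q2,q3,q4,q5,q6⟩|⟨q1,q2,q3,q4,q5,q6⟩|⟨q1,q2,q3,q4⟩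
            · omega
            · omega
            · omega
            · omega
            · have hk6 : k₆ = κ := gpos_inj w (by omega)
              rw [hk6] at q1; omega
            · omega
            · -- q: w k₆ = 3, gpos k₆ = k+1, gpos (k₆+1) = k+2
              obtain ⟨k₇, H₇⟩ := master hw (k+2)
              rw [show k+2+1 = k+3 by omega, show k+2+2 = k+4 by omega] at H₇
              rcases H₇ with ⟨r1,r2,r3,r4,r5⟩|⟨r1,r2,r3,r4,r5⟩|⟨r1,r2,r3,r4⟩|⟨r1,r2,r3,r4,r5,r6⟩|⟨r1,r2,r3,r4,r5,r6⟩|⟨r1,r2,r3,r4,r5,r6⟩|⟨r1,r2,r3,r4⟩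
              · omega
              · have hk7 : k₇ = k₆ := gpos_inj w (by omega)
                rw [hk7] at r1; omega
              · omega
              · omega
              · omega
              · exact @notB w k₇ (k+1) k₆ (by omega) (by omega) q2
              · omega
        · omega
        · omega
        · omega
      · omega
      · omega
      · omega
      · omega
  · omega
  · omega
  · omega

lemma noSq (hw : IsFixedPointG w) : ∀ n, 1 ≤ n → ∀ i, ¬ Per w n i := by
  intro n
  induction n using Nat.strong_induction_on with
  | _ n IHn =>
  intro hn i
  rcases (by omega : n = 1 ∨ n = 2 ∨ 3 ≤ n) with h1|h2|h3
  · subst h1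
    intro hp
    have hx := hp 0 (by omega)
    simp only [Nat.add_zero] at hx
    exact sq1 hw i hx
  · subst h2
    intro hp
    have h0 := hp 0 (by omega)
    simp only [Nat.add_zero] at h0
    have h1 := hp 1 (by omega)
    rw [show i+2+1 = i+3 by omega] at h1
    exact sq2 hw i ⟨h0, h1⟩
  · have mainInd : ∀ j, ¬ Per w n j := by
      intro j
      induction j using Nat.strong_induction_on with
      | _ i IHi =>
      intro hp
      have IHn' : ∀ m, m < n → 1 ≤ m → ∀ j, ¬ Per w m j := fun m hm hm1 j => IHn m hm hm1 j
      have hp0 : w i = w (i+n) := by have := hp 0 (by omega); simpa using this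
      have hp1 : w (i+1) = w (i+n+1) := hp 1 (by omega)
      obtain ⟨k, H⟩ := master hw i
      rcases H with ⟨e1,e2,e3,e4,e5⟩|⟨e1,e2,e3,e4,e5⟩|⟨e1,e2,e3,e4⟩|⟨e1,e2,e3,e4,e5,e6⟩|⟨e1,e2,e3,e4,e5,e6⟩|⟨e1,e2,e3,e4,e5,e6⟩|⟨e1,e2,e3,e4⟩
      · exact caseA hw h3 hp IHn' k e2 (Or.inl e4)
      · -- w i = 1 via 01
        obtain ⟨k₂, H₂⟩ := master hw (i+n)
        rcases H₂ with ⟨f1,f2,f3,f4,f5⟩|⟨f1,f2,f3,f4,f5⟩|⟨f1,f2,f3,f4⟩|⟨f1,f2,f3,f4,f5,f6⟩|⟨f1,f2,f3,f4,f5,f6⟩|⟨f1,f2,f3,f4,f5,f6⟩|⟨f1,f2,f3,f4⟩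
        · omega
        · have hi : 1 ≤ i := by omega
          rw [show gpos w k = i-1 by omega] at e4
          rw [show gpos w k₂ = i-1+n by omega] at f4
          exact IHi (i-1) (by omega) (ext_step hp hi (by omega))
        · omega
        · omega
        · omega
        · exact caseB1 hw h3 hp IHn' e3 f1 f2 f3 f4 f5
        · omega
      · exact caseA hw h3 hp IHn' k e2 (Or.inr (Or.inl e4))
      · exact caseA hw h3 hp IHn' k e2 (Or.inl e4)
      · -- w i = 3 nonboundary
        obtain ⟨k₂, H₂⟩ := master hw (i+n)
        rcases H₂ with ⟨f1,f2,f3,f4,f5⟩|⟨f1,f2,f3,f4,f5⟩|⟨f1,f2,f3,f4⟩|⟨f1,f2,f3,f4,f5,f6⟩|⟨f1,f2,f3,f4,f5,f6⟩|⟨f1,f2,f3,f4,f5,f6⟩|⟨f1,f2,f3,f4⟩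
        · omega
        · omega
        · omega
        · omega
        · have hi : 1 ≤ i := by omega
          rw [show gpos w k = i-1 by omega] at e4
          rw [show gpos w k₂ = i-1+n by omega] at f4
          exact IHi (i-1) (by omega) (ext_step hp hi (by omega))
        · omega
        · -- boundary block-3 at i+n
          have hw1 : w (i+n+1) = 1 := by omega
          obtain ⟨k₃, H₃⟩ := master hw (i+n+1)
          rcases H₃ with ⟨g1,g2,g3,g4,g5⟩|⟨g1,g2,g3,g4,g5⟩|⟨g1,g2,g3,g4⟩|⟨g1,g2,g3,g4,g5,g6⟩|⟨g1,g2,g3,g4,g5,g6⟩|⟨g1,g2,g3,g4,g5,g6⟩|⟨g1,g2,g3,g4⟩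
          · omega
          · have hk3 : k₃ = k₂ := gpos_inj w (by omega)
            rw [hk3] at g1; omega
          · omega
          · omega
          · omega
          · exact @notB w k₃ (i+n) k₂ (by omega) (by omega) f2
          · omega
      · -- w i = 1 via 031
        obtain ⟨k₂, H₂⟩ := master hw (i+n)
        rcases H₂ with ⟨f1,f2,f3,f4,f5⟩|⟨f1,f2,f3,f4,f5⟩|⟨f1,f2,f3,f4⟩|⟨f1,f2,f3,f4,f5,f6⟩|⟨f1,f2,f3,f4,f5,f6⟩|⟨f1,f2,f3,f4,f5,f6⟩|⟨f1,f2,f3,f4⟩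
        · omega
        · exact caseB2 hw h3 hp IHn' e1 e3 f1 f2 f3 f4
        · omega
        · omega
        · omega
        · have hi : 1 ≤ i := by omega
          rw [show gpos w k + 1 = i-1 by omega] at e5
          rw [show gpos w k₂ + 1 = i-1+n by omega] at f5
          exact IHi (i-1) (by omega) (ext_step hp hi (by omega))
        · omega
      · exact caseA hw h3 hp IHn' k e2 (Or.inr (Or.inr ⟨e4, e3⟩))
    exact mainInd i


end GSF

/-- g^ω(0) avoids the pattern xx. -/
theorem g_fixed_point_squarefree (w : ℕ → ℕ) (hw : IsFixedPointG w) :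
    ∀ U : List ℕ, U ≠ [] → ¬ IsFactorOf (U ++ U) w := by
  intro U hU hfac
  obtain ⟨i, hi⟩ := hfac
  have hn : 1 ≤ U.length := List.length_pos_iff.mpr hU
  have hlen : (U ++ U).length = U.length + U.length := by simp
  have key : ∀ j, j < U.length + U.length → (U ++ U)[j]? = some (w (i+j)) := by
    intro j hj
    conv_lhs => rw [hi]
    rw [List.getElem?_map, List.getElem?_range (by omega : j < (U ++ U).length)]
    simp
  have hper : GSF.Per w U.length i := by
    intro t ht
    have h1 := key t (by omega)
    have h2 := key (U.length + t) (by omega)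
    rw [List.getElem?_append_left (by omega : t < U.length)] at h1
    rw [List.getElem?_append_right (by omega : U.length ≤ U.length + t)] at h2
    rw [show U.length + t - U.length = t by omega] at h2
    have h3 := h1.symm.trans h2
    have h4 : w (i+t) = w (i + (U.length + t)) := Option.some.inj h3
    rw [show i + (U.length + t) = i + U.length + t by omega] at h4
    exact h4
  exact GSF.noSq hw U.length hn i hper
end

section
/- Let g = 01/2/031/3 and w = g^ω(0). Then w avoids the pattern with constants x3x: there is no nonempty word U such that U3U is a factor of w. -/
namespace X3X
def P (n : ℕ) : List ℕ := (fun l => l.flatMap g)^[n] [0]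
lemma P_succ (n : ℕ) : P (n+1) = (P n).flatMap g := by
  unfold P; rw [Function.iterate_succ_apply']
lemma glen_pos (a : ℕ) : 1 ≤ (g a).length := by
  match a with
  | 0 => simp [g]
  | 1 => simp [g]
  | 2 => simp [g]
  | (n+3) => simp [g]
lemma flatMap_len_ge (l : List ℕ) : l.length ≤ (l.flatMap g).length := by
  induction l with
  | nil => simp
  | cons a t ih =>
    simp only [List.flatMap_cons, List.length_append, List.length_cons]
    have := glen_pos a
    omega
lemma P_len (n : ℕ) : n + 1 ≤ (P n).length := by
  induction n with
  | zero => simp [P]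
  | succ n ih =>
    obtain ⟨t, ht⟩ : ∃ t, P n = 0 :: t := by
      clear ih
      induction n with
      | zero => exact ⟨[], rfl⟩
      | succ n ih =>
        obtain ⟨t, ht⟩ := ih
        exact ⟨1 :: t.flatMap g, by rw [P_succ, ht]; rfl⟩
    rw [P_succ, ht]
    have h2 := flatMap_len_ge t
    have h3 : (P n).length = t.length + 1 := by rw [ht]; simp
    simp only [List.flatMap_cons, List.length_append]
    show (g 0).length + (t.flatMap g).length ≥ n + 1 + 1
    simp only [g, List.length_cons, List.length_nil]
    omega

section W
variable (w : ℕ → ℕ)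

def phi : ℕ → ℕ
  | 0 => 0
  | m+1 => phi m + (g (w m)).length

variable (hw : IsFixedPointG w)
include hw

lemma wP (n i : ℕ) (h : i < (P n).length) : (P n)[i] = w i := by
  have h2 := hw n i h
  rw [show ((fun l => l.flatMap g)^[n] [0]) = P n from rfl] at h2
  rwa [List.getElem?_eq_getElem h, Option.some_inj] at h2

lemma w0 : w 0 = 0 := (wP w hw 0 0 (by simp [P])).symm

lemma phi_eq (n m : ℕ) (h : m ≤ (P n).length) :
    phi w m = (((P n).take m).flatMap g).length := by
  induction m with
  | zero => simp [phi]
  | succ m ih =>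
    have hm : m < (P n).length := h
    have h1 : (P n).take (m+1) = (P n).take m ++ [(P n)[m]] := by
      rw [List.take_succ, List.getElem?_eq_getElem hm]
      rfl
    rw [h1, List.flatMap_append, List.length_append, ← ih (le_of_lt hm),
      wP w hw n m hm]
    simp [phi]

lemma SUB (m j : ℕ) (hj : j < (g (w m)).length) :
    w (phi w m + j) = (g (w m))[j] := by
  have hm : m < (P m).length := by have := P_len m; omega
  have hsplit : P (m+1) = ((P m).take m).flatMap g ++ (g (w m) ++ ((P m).drop (m+1)).flatMap g) := by
    rw [P_succ]
    conv_lhs => rw [← List.take_append_drop m (P m)]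
    rw [List.flatMap_append]
    congr 1
    rw [List.drop_eq_getElem_cons hm, List.flatMap_cons, wP w hw m m hm]
  have hlen : phi w m = (((P m).take m).flatMap g).length := phi_eq w hw m m (le_of_lt hm)
  have hidx : phi w m + j < (P (m+1)).length := by
    rw [hsplit, List.length_append, List.length_append, hlen]
    omega
  have hval := wP w hw (m+1) (phi w m + j) hidx
  rw [← hval]
  have hidx2 : phi w m + j < (((P m).take m).flatMap g ++ (g (w m) ++ ((P m).drop (m+1)).flatMap g)).length := by
    rw [← hsplit]; exact hidx
  rw [List.getElem_of_eq hsplit hidx]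
  rw [List.getElem_append_right (by omega : (((P m).take m).flatMap g).length ≤ phi w m + j)]
  have hj2 : phi w m + j - (((P m).take m).flatMap g).length = j := by omega
  simp only [hj2]
  rw [List.getElem_append_left hj]

lemma MASTER (m : ℕ) :
    (w m = 0 ∧ phi w (m+1) = phi w m + 2 ∧ w (phi w m) = 0 ∧ w (phi w m + 1) = 1)
  ∨ (w m = 1 ∧ phi w (m+1) = phi w m + 1 ∧ w (phi w m) = 2)
  ∨ (w m = 2 ∧ phi w (m+1) = phi w m + 3 ∧ w (phi w m) = 0 ∧ w (phi w m + 1) = 3 ∧ w (phi w m + 2) = 1)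
  ∨ (3 ≤ w m ∧ phi w (m+1) = phi w m + 1 ∧ w (phi w m) = 3) := by
  have hphi : phi w (m+1) = phi w m + (g (w m)).length := rfl
  match hv : w m with
  | 0 =>
    left
    have h0 := SUB w hw m 0 (by rw [hv]; simp [g])
    have h1 := SUB w hw m 1 (by rw [hv]; simp [g])
    simp only [hv, g] at h0 h1 hphi
    exact ⟨rfl, by simpa using hphi, by simpa using h0, by simpa using h1⟩
  | 1 =>
    right; left
    have h0 := SUB w hw m 0 (by rw [hv]; simp [g])
    simp only [hv, g] at h0 hphi
    exact ⟨rfl, by simpa using hphi, by simpa using h0⟩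
  | 2 =>
    right; right; left
    have h0 := SUB w hw m 0 (by rw [hv]; simp [g])
    have h1 := SUB w hw m 1 (by rw [hv]; simp [g])
    have h2 := SUB w hw m 2 (by rw [hv]; simp [g])
    simp only [hv, g] at h0 h1 h2 hphi
    exact ⟨rfl, by simpa using hphi, by simpa using h0, by simpa using h1, by simpa using h2⟩
  | (k+3) =>
    right; right; right
    have h0 := SUB w hw m 0 (by rw [hv]; simp [g])
    simp only [hv, g] at h0 hphi
    exact ⟨by omega, by simpa using hphi, by simpa using h0⟩

omit hw

lemma phi_succ_gt (m : ℕ) : phi w m < phi w (m+1) := by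
  have := glen_pos (w m)
  have h : phi w (m+1) = phi w m + (g (w m)).length := rfl
  omega

lemma phi_mono : StrictMono (phi w) := strictMono_nat_of_lt_succ (phi_succ_gt w)

lemma phi_le_add (a b : ℕ) : phi w a + b ≤ phi w (a + b) := by
  induction b with
  | zero => simp
  | succ b ih =>
    have := phi_succ_gt w (a + b)
    have h : a + (b+1) = (a+b) + 1 := by omega
    rw [h]
    omega

lemma COVER (p : ℕ) : ∃ m, phi w m ≤ p ∧ p < phi w (m+1) := by
  induction p with
  | zero => exact ⟨0, by simp [phi], by have := phi_succ_gt w 0; simp [phi] at *; omega⟩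
  | succ p ih =>
    obtain ⟨m, h1, h2⟩ := ih
    by_cases h : p + 1 < phi w (m+1)
    · exact ⟨m, by omega, h⟩
    · exact ⟨m+1, by omega, by have := phi_succ_gt w (m+1); omega⟩

include hw

lemma LETTERS (p : ℕ) : w p = 0 ∨ w p = 1 ∨ w p = 2 ∨ w p = 3 := by
  obtain ⟨m, h1, h2⟩ := COVER w p
  rcases MASTER w hw m with ⟨_, hl, c0, c1⟩ | ⟨_, hl, c0⟩ | ⟨_, hl, c0, c1, c2⟩ | ⟨_, hl, c0⟩ <;>
    rw [hl] at h2
  · rcases (by omega : p = phi w m ∨ p = phi w m + 1) with h | h <;> rw [h] <;> simp [c0, c1]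
  · rw [(by omega : p = phi w m)]; simp [c0]
  · rcases (by omega : p = phi w m ∨ p = phi w m + 1 ∨ p = phi w m + 2) with h | h | h <;>
      rw [h] <;> simp [c0, c1, c2]
  · rw [(by omega : p = phi w m)]; simp [c0]

lemma F0 (q : ℕ) (h : w q = 0) :
    ∃ m, phi w m = q ∧
      ((w m = 0 ∧ w (q+1) = 1 ∧ phi w (m+1) = q+2)
     ∨ (w m = 2 ∧ w (q+1) = 3 ∧ w (q+2) = 1 ∧ phi w (m+1) = q+3)) := by
  obtain ⟨m, h1, h2⟩ := COVER w q
  rcases MASTER w hw m with ⟨hv, hl, c0, c1⟩ | ⟨hv, hl, c0⟩ | ⟨hv, hl, c0, c1, c2⟩ | ⟨hv, hl, c0⟩ <;>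
    rw [hl] at h2
  · rcases (by omega : q = phi w m ∨ q = phi w m + 1) with hq | hq
    · subst hq; exact ⟨m, rfl, Or.inl ⟨hv, c1, by omega⟩⟩
    · rw [hq] at h; rw [c1] at h; omega
  · rw [(by omega : q = phi w m)] at h; rw [c0] at h; omega
  · rcases (by omega : q = phi w m ∨ q = phi w m + 1 ∨ q = phi w m + 2) with hq | hq | hq
    · refine ⟨m, hq.symm, Or.inr ⟨hv, ?_, ?_, by omega⟩⟩
      · rw [hq]; exact c1
      · rw [hq, (by omega : phi w m + 1 + 1 = phi w m + 2)] at *; exact c2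
    · rw [hq, c1] at h; omega
    · rw [hq, c2] at h; omega
  · rw [(by omega : q = phi w m)] at h; rw [c0] at h; omega

lemma F1 (q : ℕ) (h : w q = 1) :
    ∃ m, phi w (m+1) = q + 1 ∧
      ((w m = 0 ∧ phi w m + 1 = q ∧ w (phi w m) = 0)
     ∨ (w m = 2 ∧ phi w m + 2 = q ∧ w (phi w m) = 0 ∧ w (phi w m + 1) = 3)) := by
  obtain ⟨m, h1, h2⟩ := COVER w q
  rcases MASTER w hw m with ⟨hv, hl, c0, c1⟩ | ⟨hv, hl, c0⟩ | ⟨hv, hl, c0, c1, c2⟩ | ⟨hv, hl, c0⟩ <;>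
    rw [hl] at h2
  · rcases (by omega : q = phi w m ∨ q = phi w m + 1) with hq | hq
    · rw [hq, c0] at h; omega
    · exact ⟨m, by omega, Or.inl ⟨hv, by omega, c0⟩⟩
  · rw [(by omega : q = phi w m), c0] at h; omega
  · rcases (by omega : q = phi w m ∨ q = phi w m + 1 ∨ q = phi w m + 2) with hq | hq | hq
    · rw [hq, c0] at h; omega
    · rw [hq, c1] at h; omega
    · exact ⟨m, by omega, Or.inr ⟨hv, by omega, c0, c1⟩⟩
  · rw [(by omega : q = phi w m), c0] at h; omega

lemma F2 (q : ℕ) (h : w q = 2) :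
    ∃ m, phi w m = q ∧ phi w (m+1) = q + 1 ∧ w m = 1 := by
  obtain ⟨m, h1, h2⟩ := COVER w q
  rcases MASTER w hw m with ⟨hv, hl, c0, c1⟩ | ⟨hv, hl, c0⟩ | ⟨hv, hl, c0, c1, c2⟩ | ⟨hv, hl, c0⟩ <;>
    rw [hl] at h2
  · rcases (by omega : q = phi w m ∨ q = phi w m + 1) with hq | hq <;>
      [rw [hq, c0] at h; rw [hq, c1] at h] <;> omega
  · exact ⟨m, by omega, by omega, hv⟩
  · rcases (by omega : q = phi w m ∨ q = phi w m + 1 ∨ q = phi w m + 2) with hq | hq | hq <;>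
      [rw [hq, c0] at h; rw [hq, c1] at h; rw [hq, c2] at h] <;> omega
  · rw [(by omega : q = phi w m), c0] at h; omega

lemma F3 (q : ℕ) (h : w q = 3) :
    (∃ m, w m = 2 ∧ phi w m + 1 = q ∧ phi w (m+1) = q + 2 ∧ w (phi w m) = 0 ∧ w (q+1) = 1)
  ∨ (∃ m, phi w m = q ∧ phi w (m+1) = q + 1 ∧ w m = 3) := by
  obtain ⟨m, h1, h2⟩ := COVER w q
  rcases MASTER w hw m with ⟨hv, hl, c0, c1⟩ | ⟨hv, hl, c0⟩ | ⟨hv, hl, c0, c1, c2⟩ | ⟨hv, hl, c0⟩ <;>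
    rw [hl] at h2
  · rcases (by omega : q = phi w m ∨ q = phi w m + 1) with hq | hq <;>
      [rw [hq, c0] at h; rw [hq, c1] at h] <;> omega
  · rw [(by omega : q = phi w m), c0] at h; omega
  · rcases (by omega : q = phi w m ∨ q = phi w m + 1 ∨ q = phi w m + 2) with hq | hq | hq
    · rw [hq, c0] at h; omega
    · refine Or.inl ⟨m, hv, by omega, by omega, c0, ?_⟩
      rw [hq, (by omega : phi w m + 1 + 1 = phi w m + 2)] at *; exact c2
    · rw [hq, c2] at h; omega
  · right
    refine ⟨m, by omega, by omega, ?_⟩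
    have := LETTERS w hw m
    omega

lemma FIRST (a : ℕ) : w (phi w a) ≠ 1 := by
  rcases MASTER w hw a with ⟨_, _, c0, _⟩ | ⟨_, _, c0⟩ | ⟨_, _, c0, _, _⟩ | ⟨_, _, c0⟩ <;> omega

lemma FIRST0 (a : ℕ) (h : w (phi w a) = 0) : w a = 0 ∨ w a = 2 := by
  rcases MASTER w hw a with ⟨hv, _⟩ | ⟨hv, _, c0⟩ | ⟨hv, _⟩ | ⟨hv, _, c0⟩ <;> omega

lemma NO11 (q : ℕ) (h : w q = 1) : w (q+1) ≠ 1 := by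
  obtain ⟨m, hm, _⟩ := F1 w hw q h
  rw [← hm]
  exact FIRST w hw (m+1)

lemma NO22 (q : ℕ) (h : w q = 2) : w (q+1) ≠ 2 := by
  intro h2
  obtain ⟨m, hm1, hm2, hm3⟩ := F2 w hw q h
  obtain ⟨m', hm1', hm2', hm3'⟩ := F2 w hw (q+1) h2
  have he : m + 1 = m' := (phi_mono w).injective (by omega)
  rw [← he] at hm3'
  exact NO11 w hw m hm3 hm3'

lemma phi_gt_self (m : ℕ) (hm : 1 ≤ m) : m < phi w m := by
  induction m with
  | zero => omega
  | succ m ih =>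
    have h0 : phi w 1 = phi w 0 + (g (w 0)).length := rfl
    rw [w0 w hw] at h0
    have h1 : phi w 1 = 2 := by simpa [phi, g] using h0
    rcases Nat.lt_or_ge m 1 with h | h
    · have hm0 : m = 0 := by omega
      subst hm0
      simp only [Nat.zero_add]
      omega
    · have := ih h
      have := phi_succ_gt w m
      omega

lemma NO33 (q : ℕ) (h3 : w q = 3) : w (q+1) ≠ 3 := by
  induction q using Nat.strong_induction_on with
  | _ q IH =>
  intro h4
  rcases F3 w hw q h3 with ⟨m, _, _, _, _, c⟩ | ⟨m, hm1, hm2, hm3⟩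
  · omega
  rcases F3 w hw (q+1) h4 with ⟨m', hv', hm1', hm2', hc', _⟩ | ⟨m', hm1', hm2', hm3'⟩
  · have : m' = m := (phi_mono w).injective (by omega)
    rw [this] at hc'
    rw [hm1] at hc'
    omega
  · have hmm : m' = m + 1 := (phi_mono w).injective (by omega)
    have hq : m ≥ 1 := by
      by_contra h
      have : m = 0 := by omega
      rw [this] at hm3
      have := w0 w hw
      omega
    have hlt : m < q := by
      have := phi_gt_self w hw m hq
      omega
    rw [hmm] at hm3'
    exact IH m hlt hm3 hm3'

lemma SYNC (len : ℕ) : ∀ m1 m2,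
    (∀ k, phi w m1 + k < phi w (m1 + len) → w (phi w m1 + k) = w (phi w m2 + k)) →
    (∀ j, j < len → w (m1 + j) = w (m2 + j)) ∧
    phi w (m1 + len) + phi w m2 = phi w (m2 + len) + phi w m1 := by
  induction len with
  | zero => exact fun m1 m2 _ => ⟨fun j hj => by omega, by rw [Nat.add_zero, Nat.add_zero]; omega⟩
  | succ len IH =>
    intro m1 m2 hyp
    have hmono : phi w (m1 + 1) ≤ phi w (m1 + (len + 1)) :=
      (phi_mono w).monotone (by omega)
    have hstep : ∀ (L : ℕ), phi w (m1+1) = phi w m1 + L → ∀ k < L,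
        phi w m1 + k < phi w (m1 + (len+1)) := by
      intro L hL k hk
      omega
    -- case analysis on the first block
    rcases MASTER w hw m1 with ⟨hv, hl, c0, c1⟩ | ⟨hv, hl, c0⟩ | ⟨hv, hl, c0, c1, c2⟩ | ⟨hv, hl, c0⟩
    · -- w m1 = 0, block 01
      have hk0 := hyp 0 (hstep 2 hl 0 (by omega))
      have hk1 := hyp 1 (hstep 2 hl 1 (by omega))
      rw [Nat.add_zero] at hk0
      rw [c1] at hk1
      rw [c0] at hk0
      obtain ⟨m', hm'1, hbr⟩ := F0 w hw (phi w m2) hk0.symm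
      have hmm : m2 = m' := ((phi_mono w).injective hm'1).symm
      subst hmm
      rcases hbr with ⟨hv2, hc2, hl2⟩ | ⟨hv2, hc2, _, _⟩
      · have IH2 := IH (m1+1) (m2+1) (by
          intro k hk
          rw [hl, hl2]
          rw [show phi w m1 + 2 + k = phi w m1 + (k+2) from by omega,
              show phi w m2 + 2 + k = phi w m2 + (k+2) from by omega]
          apply hyp (k+2)
          rw [hl] at hk
          rw [show m1 + 1 + len = m1 + (len + 1) from by omega] at hk
          omega)
        constructor
        · intro j hj
          match j with
          | 0 => simpa using (hv.trans hv2.symm)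
          | j+1 =>
            have := IH2.1 j (by omega)
            rw [show m1 + 1 + j = m1 + (j+1) from by omega,
                show m2 + 1 + j = m2 + (j+1) from by omega] at this
            exact this
        · have := IH2.2
          rw [show m1 + 1 + len = m1 + (len + 1) from by omega,
              show m2 + 1 + len = m2 + (len + 1) from by omega] at this
          omega
      · rw [hc2] at hk1; omega
    · -- w m1 = 1, block [2]
      have hk0 := hyp 0 (hstep 1 hl 0 (by omega))
      rw [Nat.add_zero] at hk0
      rw [c0] at hk0
      obtain ⟨m', hm'1, hl2, hv2⟩ := F2 w hw (phi w m2) hk0.symm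
      have hmm : m2 = m' := ((phi_mono w).injective hm'1).symm
      subst hmm
      have IH2 := IH (m1+1) (m2+1) (by
        intro k hk
        rw [hl, hl2]
        rw [show phi w m1 + 1 + k = phi w m1 + (k+1) from by omega,
            show phi w m2 + 1 + k = phi w m2 + (k+1) from by omega]
        apply hyp (k+1)
        rw [hl] at hk
        rw [show m1 + 1 + len = m1 + (len + 1) from by omega] at hk
        omega)
      constructor
      · intro j hj
        match j with
        | 0 => simpa using (hv.trans hv2.symm)
        | j+1 =>
          have := IH2.1 j (by omega)
          rw [show m1 + 1 + j = m1 + (j+1) from by omega,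
              show m2 + 1 + j = m2 + (j+1) from by omega] at this
          exact this
      · have := IH2.2
        rw [show m1 + 1 + len = m1 + (len + 1) from by omega,
            show m2 + 1 + len = m2 + (len + 1) from by omega] at this
        omega
    · -- w m1 = 2, block 031
      have hk0 := hyp 0 (hstep 3 hl 0 (by omega))
      have hk1 := hyp 1 (hstep 3 hl 1 (by omega))
      rw [Nat.add_zero] at hk0
      rw [c0] at hk0
      rw [c1] at hk1
      obtain ⟨m', hm'1, hbr⟩ := F0 w hw (phi w m2) hk0.symm
      have hmm : m2 = m' := ((phi_mono w).injective hm'1).symm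
      subst hmm
      rcases hbr with ⟨hv2, hc2, hl2⟩ | ⟨hv2, hc2, hc3, hl2⟩
      · rw [hc2] at hk1; omega
      · have IH2 := IH (m1+1) (m2+1) (by
          intro k hk
          rw [hl, hl2]
          rw [show phi w m1 + 3 + k = phi w m1 + (k+3) from by omega,
              show phi w m2 + 3 + k = phi w m2 + (k+3) from by omega]
          apply hyp (k+3)
          rw [hl] at hk
          rw [show m1 + 1 + len = m1 + (len + 1) from by omega] at hk
          omega)
        constructor
        · intro j hj
          match j with
          | 0 => simpa using (hv.trans hv2.symm)
          | j+1 =>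
            have := IH2.1 j (by omega)
            rw [show m1 + 1 + j = m1 + (j+1) from by omega,
                show m2 + 1 + j = m2 + (j+1) from by omega] at this
            exact this
        · have := IH2.2
          rw [show m1 + 1 + len = m1 + (len + 1) from by omega,
              show m2 + 1 + len = m2 + (len + 1) from by omega] at this
          omega
    · -- w m1 ≥ 3, block [3]
      have hk0 := hyp 0 (hstep 1 hl 0 (by omega))
      rw [Nat.add_zero] at hk0
      rw [c0] at hk0
      rcases F3 w hw (phi w m2) hk0.symm with ⟨m'', _, hm''1, hm''2, _, _⟩ | ⟨m', hm'1, hl2, hv2⟩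
      · exfalso
        have h1 : phi w m'' < phi w m2 := by omega
        have h2 : phi w m2 < phi w (m''+1) := by omega
        have := (phi_mono w).lt_iff_lt.mp h1
        have := (phi_mono w).lt_iff_lt.mp h2
        omega
      · have hmm : m2 = m' := ((phi_mono w).injective hm'1).symm
        subst hmm
        have IH2 := IH (m1+1) (m2+1) (by
          intro k hk
          rw [hl, hl2]
          rw [show phi w m1 + 1 + k = phi w m1 + (k+1) from by omega,
              show phi w m2 + 1 + k = phi w m2 + (k+1) from by omega]
          apply hyp (k+1)
          rw [hl] at hk
          rw [show m1 + 1 + len = m1 + (len + 1) from by omega] at hk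
          omega)
        constructor
        · intro j hj
          match j with
          | 0 =>
            have hL := LETTERS w hw m1
            have : w m1 = 3 := by omega
            simpa using (this.trans hv2.symm)
          | j+1 =>
            have := IH2.1 j (by omega)
            rw [show m1 + 1 + j = m1 + (j+1) from by omega,
                show m2 + 1 + j = m2 + (j+1) from by omega] at this
            exact this
        · have := IH2.2
          rw [show m1 + 1 + len = m1 + (len + 1) from by omega,
              show m2 + 1 + len = m2 + (len + 1) from by omega] at this
          omega

def Rep (i n : ℕ) : Prop := ∀ k, k < n → w (i+k) = w (i+n+1+k)

def H3 (i n : ℕ) : Prop := Rep w i n ∧ w (i+n) = 3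
def H2 (i n : ℕ) : Prop := Rep w (i+1) n ∧ w (i+1+n) = 2 ∧ (w i = 0 ∨ w i = 2)
def H1 (i n : ℕ) : Prop := Rep w (i+1) n ∧ w (i+1+n) = 1 ∧ w i = 1
def H0 (i n : ℕ) : Prop := Rep w (i+1) n ∧ w (i+1+n) = 0 ∧
  (w i = 0 ∨ (w i = 2 ∧ (w (i+2*n+2) = 0 ∨ w (i+2*n+2) = 2)))

lemma case3 (n : ℕ) (hn : 1 ≤ n)
    (IH : ∀ n', 1 ≤ n' → n' < n →
      ∀ i', ¬H3 w i' n' ∧ ¬H2 w i' n' ∧ ¬H1 w i' n' ∧ ¬H0 w i' n')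
    (i : ℕ) (hrep : Rep w i n) (hc : w (i+n) = 3) : False := by
  have hwi : w i = w (i+n+1) := by
    have := hrep 0 (by omega)
    simpa using this
  rcases F3 w hw (i+n) hc with ⟨m, hvm, hq1, hq2, hq3, hq4⟩ | ⟨m, hq1, hq2, hvm⟩
  · -- central 3 is the middle of a block 031
    have hwi1 : w i = 1 := by rw [hwi]; exact hq4
    by_cases hn1 : n = 1
    · -- then w i = w (phi m) = 0, contradiction
      have : phi w m = i := by omega
      rw [this] at hq3
      omega
    have hn2 : 2 ≤ n := by omega
    obtain ⟨m1', hb1, hbr⟩ := F1 w hw i hwi1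
    have hm1v : w m1' = 0 ∨ w m1' = 2 := by rcases hbr with ⟨h, _⟩ | ⟨h, _⟩ <;> omega
    have hphim1 : phi w (m1'+1) = i + 1 := by omega
    have hphim : phi w m = i + n - 1 := by omega
    have hm1m : m1' + 1 ≤ m := by
      by_contra h
      have := (phi_mono w).monotone (show m ≤ m1' from by omega)
      have := phi_succ_gt w m1'
      omega
    set ν := m - (m1'+1) with hν
    have hmν : m1' + 1 + ν = m := by omega
    have hsync := SYNC w hw ν (m1'+1) (m+1) (by
      intro k hk
      rw [hmν, hphim1, hphim] at *
      have hkb : k < n - 2 := by omega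
      have := hrep (k+1) (by omega)
      rw [show i + (k+1) = i + 1 + k from by omega] at this
      rw [show i + n + 1 + (k+1) = i + n + 2 + k from by omega] at this
      rw [hq2]
      exact this)
    rw [hmν] at hsync
    obtain ⟨hsV, hsE⟩ := hsync
    -- phi (m+1+ν) = i + 2n
    have hE : phi w (m+1+ν) = i + 2*n := by
      rw [hphim, hq2, hphim1] at hsE
      omega
    by_cases hν0 : ν = 0
    · -- m = m1'+1 : letter before block [2]-preimage... w m = 2, w m1' ∈ {0,2}
      have hmm : m = m1' + 1 := by omega
      rcases hm1v with h0 | h2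
      · obtain ⟨mm, _, hbr2⟩ := F0 w hw m1' h0
        rcases hbr2 with ⟨_, hx, _⟩ | ⟨_, hx, _, _⟩ <;> rw [← hmm] at hx <;> omega
      · exact NO22 w hw m1' h2 (by rw [← hmm]; exact hvm)
    · -- recurse with H2 m1' ν
      have hν1 : 1 ≤ ν := by omega
      have hνn : ν < n := by
        have := phi_le_add w (m1'+1) ν
        rw [hmν, hphim, hphim1] at this
        omega
      refine (IH ν hν1 hνn m1').2.1 ⟨?_, ?_, hm1v⟩
      · intro j hj
        have := hsV j hj
        rw [show m1' + 1 + ν + 1 + j = m + 1 + j from by omega]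
        exact this
      · rw [show m1' + 1 + ν = m from by omega]
        exact hvm
  · -- central 3 is a whole block [3]
    have hfirst : w (i+n+1) ≠ 1 := by
      rw [← hq2]
      exact FIRST w hw (m+1)
    have hwine1 : w i ≠ 1 := by rw [hwi]; exact hfirst
    -- find the block boundary at i
    obtain ⟨m1, hc1, hc2⟩ := COVER w i
    have hbi : phi w m1 = i := by
      rcases MASTER w hw m1 with ⟨hv, hl, c0, c1⟩ | ⟨hv, hl, c0⟩ | ⟨hv, hl, c0, c1, c2⟩ | ⟨hv, hl, c0⟩ <;>
        rw [hl] at hc2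
      · rcases (by omega : i = phi w m1 ∨ i = phi w m1 + 1) with h | h
        · omega
        · rw [← h] at c1; omega
      · omega
      · rcases (by omega : i = phi w m1 ∨ i = phi w m1 + 1 ∨ i = phi w m1 + 2) with h | h | h
        · omega
        · -- w i = 3, w (i+1) = 1
          exfalso
          have hwi3 : w i = 3 := by rw [← h] at c1; exact c1
          have hwip1 : w (i+1) = 1 := by rw [show i + 1 = phi w m1 + 2 from by omega]; exact c2
          by_cases hn1 : n = 1
          · rw [show i + n = i + 1 from by omega] at hc; omega
          · have h2 := hrep 1 (by omega)
            rw [hwip1] at h2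
            -- w (i+n+2) = 1, but block at i+n+1 is [3]
            have hw3 : w (i+n+1) = 3 := by rw [← hwi]; exact hwi3
            rcases MASTER w hw (m+1) with ⟨_, _, d0, _⟩ | ⟨_, _, d0⟩ | ⟨_, _, d0, _, _⟩ | ⟨_, hl2, d0⟩ <;>
              rw [hq2] at *
            · omega
            · omega
            · omega
            · -- phi (m+2) = i+n+2
              have : w (i+n+1+1) ≠ 1 := by
                rw [← hl2]
                exact FIRST w hw (m+1+1)
              omega
        · rw [← h] at c2; omega
      · omega
    have hm1m : m1 < m := by
      have := (phi_mono w).lt_iff_lt.mp (show phi w m1 < phi w m from by omega)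
      exact this
    set ν := m - m1 with hν
    have hmν : m1 + ν = m := by omega
    have hsync := SYNC w hw ν m1 (m+1) (by
      intro k hk
      rw [hmν, hbi, hq1] at hk
      rw [hbi, hq2]
      have := hrep k (by omega)
      exact this)
    rw [hmν] at hsync
    obtain ⟨hsV, hsE⟩ := hsync
    have hνn : ν ≤ n := by
      have := phi_le_add w m1 ν
      rw [hmν, hq1, hbi] at this
      omega
    have hH3 : H3 w m1 ν := by
      refine ⟨?_, ?_⟩
      · intro j hj
        have := hsV j hj
        rw [show m1 + ν + 1 + j = m + 1 + j from by omega]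
        exact this
      · rw [show m1 + ν = m from by omega]
        exact hvm
    by_cases hνeq : ν < n
    · exact (IH ν (by omega) hνeq m1).1 hH3
    · -- ν = n : all blocks have length 1, letters in {1,3}
      have hνn' : ν = n := by omega
      have hsz : ∀ j, j < n → phi w (m1 + j + 1) = phi w (m1 + j) + 1 := by
        intro j hj
        have h1 := phi_le_add w m1 j
        have h2 := phi_succ_gt w (m1 + j)
        have h3 := phi_le_add w (m1 + j + 1) (n - (j+1))
        rw [show m1 + j + 1 + (n - (j+1)) = m1 + n from by omega] at h3
        rw [show m1 + n = m from by omega, hq1] at h3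
        rw [hbi] at h1
        omega
      have hlet : ∀ j, j < n → w (m1 + j) = 1 ∨ w (m1 + j) = 3 := by
        intro j hj
        have := hsz j hj
        rcases MASTER w hw (m1+j) with ⟨hv, hl, _⟩ | ⟨hv, _, _⟩ | ⟨hv, hl, _⟩ | ⟨hv, _, _⟩
        · omega
        · left; exact hv
        · omega
        · right; have := LETTERS w hw (m1+j); omega
      -- w (m1 + (n-1)) ∈ {1,3}
      have hlast := hlet (n-1) (by omega)
      rcases F3 w hw m hvm with ⟨m2, _, hr1, _, hr3, _⟩ | ⟨m2, hr1, hr2, _⟩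
      · -- mid: w (m-1) = 0
        have : phi w m2 = m1 + (n-1) := by omega
        rw [this] at hr3
        omega
      · -- full: w (m+1) = w m1 ∈ {1,3}
        have h0 := hsV 0 (by omega)
        rw [Nat.add_zero, Nat.add_zero] at h0
        rcases hlet 0 (by omega) with h1 | h3
        · rw [Nat.add_zero] at h1
          have : w (m+1) = 1 := by rw [← h0]; exact h1
          have : w (phi w (m2+1)) = 1 := by rw [hr2]; exact this
          exact FIRST w hw (m2+1) this
        · rw [Nat.add_zero] at h3
          have : w (m+1) = 3 := by rw [← h0]; exact h3
          exact NO33 w hw m hvm this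

lemma case2 (n : ℕ) (hn : 1 ≤ n)
    (IH : ∀ n', 1 ≤ n' → n' < n →
      ∀ i', ¬H3 w i' n' ∧ ¬H2 w i' n' ∧ ¬H1 w i' n' ∧ ¬H0 w i' n')
    (i : ℕ) (hrep : Rep w (i+1) n) (hc : w (i+1+n) = 2)
    (hctx : w i = 0 ∨ w i = 2) : False := by
  obtain ⟨m, hq1, hq2, hvm⟩ := F2 w hw (i+1+n) hc
  have hwi1 : w (i+1) = w (i+n+2) := by
    have := hrep 0 (by omega)
    rw [show i + 1 + n + 1 + 0 = i + n + 2 from by omega, Nat.add_zero] at this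
    exact this
  have hfirst : w (i+n+2) ≠ 1 := by
    rw [show i + n + 2 = phi w (m+1) from by omega]
    exact FIRST w hw (m+1)
  rcases hctx with h0 | h2
  · -- w i = 0 : leads to contradiction
    obtain ⟨mi, hbi, hbr⟩ := F0 w hw i h0
    rcases hbr with ⟨_, hx1, _⟩ | ⟨_, hx1, hx2, _⟩
    · exact hfirst (by rw [← hwi1]; exact hx1)
    · -- w (i+1) = 3, w (i+2) = 1
      by_cases hn1 : n = 1
      · rw [show i + 1 + n = i + 2 from by omega] at hc; omega
      · have h2' := hrep 1 (by omega)
        rw [hx2] at h2'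
        -- w (i+n+3) = 1, block at i+n+2 is [3]
        have hw3 : w (i+n+2) = 3 := by rw [← hwi1]; exact hx1
        rcases MASTER w hw (m+1) with ⟨_, _, d0, _⟩ | ⟨_, _, d0⟩ | ⟨_, _, d0, _, _⟩ | ⟨_, hl2, d0⟩ <;>
          rw [hq2] at *
        · rw [show i + 1 + n + 1 = i + n + 2 from by omega] at d0; omega
        · rw [show i + 1 + n + 1 = i + n + 2 from by omega] at d0; omega
        · rw [show i + 1 + n + 1 = i + n + 2 from by omega] at d0; omega
        · have hxx : w (i+1+n+1+1) ≠ 1 := by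
            rw [← hl2]; exact FIRST w hw (m+1+1)
          omega
  · -- w i = 2
    obtain ⟨mi, hbi, hbl, hvmi⟩ := F2 w hw i h2
    have hphim1 : phi w (mi+1) = i + 1 := by omega
    have hm1m : mi + 1 ≤ m := by
      by_contra h
      have := (phi_mono w).monotone (show m ≤ mi from by omega)
      omega
    set ν := m - (mi+1) with hν
    have hmν : mi + 1 + ν = m := by omega
    have hsync := SYNC w hw ν (mi+1) (m+1) (by
      intro k hk
      rw [hmν, hphim1, hq1] at hk
      rw [hphim1, hq2]
      have := hrep k (by omega)
      rw [show i + 1 + n + 1 + k = i + 1 + n + 1 + k from rfl] at this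
      exact this)
    rw [hmν] at hsync
    obtain ⟨hsV, hsE⟩ := hsync
    have hνn : ν ≤ n := by
      have := phi_le_add w (mi+1) ν
      rw [hmν, hq1, hphim1] at this
      omega
    have hν1 : 1 ≤ ν := by
      rcases Nat.eq_zero_or_pos ν with h | h
      · exfalso
        have : mi + 1 = m := by omega
        rw [this] at hphim1
        omega
      · omega
    have hH1 : H1 w mi ν := by
      refine ⟨?_, ?_, hvmi⟩
      · intro j hj
        have := hsV j hj
        rw [show mi + 1 + ν + 1 + j = m + 1 + j from by omega]
        exact this
      · rw [show mi + 1 + ν = m from by omega]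
        exact hvm
    by_cases hνeq : ν < n
    · exact (IH ν hν1 hνeq mi).2.2.1 hH1
    · have hνn' : ν = n := by omega
      have hsz : ∀ j, j < n → phi w (mi + 1 + j + 1) = phi w (mi + 1 + j) + 1 := by
        intro j hj
        have h1 := phi_le_add w (mi+1) j
        have hb2 := phi_succ_gt w (mi + 1 + j)
        have h3 := phi_le_add w (mi + 1 + j + 1) (n - (j+1))
        rw [show mi + 1 + j + 1 + (n - (j+1)) = mi + 1 + n from by omega] at h3
        rw [show mi + 1 + n = m from by omega, hq1] at h3
        rw [hphim1] at h1
        omega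
      have hlet : ∀ j, j < n → w (mi + 1 + j) = 1 ∨ w (mi + 1 + j) = 3 := by
        intro j hj
        have := hsz j hj
        rcases MASTER w hw (mi+1+j) with ⟨hv, hl, _⟩ | ⟨hv, _, _⟩ | ⟨hv, hl, _⟩ | ⟨hv, _, _⟩
        · omega
        · left; exact hv
        · omega
        · right; have := LETTERS w hw (mi+1+j); omega
      -- central 1 at m; letter before it
      obtain ⟨m2, hb2, hbr2⟩ := F1 w hw m hvm
      rcases hbr2 with ⟨_, hr1, hr3⟩ | ⟨_, hr1, hr3, _⟩
      · -- w (m-1) = 0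
        have : phi w m2 = mi + 1 + (n-1) := by omega
        rw [this] at hr3
        rcases hlet (n-1) (by omega) with h | h <;> omega
      · -- w (m-2) = 0
        by_cases hn1 : n = 1
        · have : phi w m2 = mi := by omega
          rw [this] at hr3
          omega
        · have : phi w m2 = mi + 1 + (n-2) := by omega
          rw [this] at hr3
          rcases hlet (n-2) (by omega) with h | h <;> omega

lemma case1 (n : ℕ) (hn : 1 ≤ n)
    (IH : ∀ n', 1 ≤ n' → n' < n →
      ∀ i', ¬H3 w i' n' ∧ ¬H2 w i' n' ∧ ¬H1 w i' n' ∧ ¬H0 w i' n')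
    (i : ℕ) (hrep : Rep w (i+1) n) (hc : w (i+1+n) = 1)
    (hctx : w i = 1) : False := by
  obtain ⟨mi', hbl, hbr⟩ := F1 w hw i hctx
  have hmi'v : w mi' = 0 ∨ w mi' = 2 := by rcases hbr with ⟨h, _⟩ | ⟨h, _⟩ <;> omega
  have hphim1 : phi w (mi'+1) = i + 1 := by omega
  obtain ⟨m2, hb2, hbr2⟩ := F1 w hw (i+1+n) hc
  rcases hbr2 with ⟨hv2, hr1, hr3⟩ | ⟨hv2, hr1, hr3, hr4⟩
  · -- sub a : block 01 at (i+n, i+1+n)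
    have hq0 : phi w m2 = i + n := by omega
    have hm1m : mi' + 1 ≤ m2 := by
      by_contra h
      have := (phi_mono w).monotone (show m2 ≤ mi' from by omega)
      omega
    set ν := m2 - (mi'+1) with hν
    have hmν : mi' + 1 + ν = m2 := by omega
    have hsync := SYNC w hw ν (mi'+1) (m2+1) (by
      intro k hk
      rw [hmν, hphim1, hq0] at hk
      rw [hphim1, hb2]
      have := hrep k (by omega)
      rw [show i + 1 + n + 1 + k = i + 1 + n + 1 + k from rfl] at this
      exact this)
    rw [hmν] at hsync
    obtain ⟨hsV, hsE⟩ := hsync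
    -- w at end of second copy : position i+2n+1
    have hend : w (i + 2*n + 1) = 0 := by
      have := hrep (n-1) (by omega)
      rw [show i + 1 + (n-1) = i + n from by omega,
          show i + 1 + n + 1 + (n-1) = i + 2*n + 1 from by omega] at this
      rw [← this, ← hq0]
      exact hr3
    have hEnd : phi w (m2 + 1 + ν) = i + 2*n + 1 := by
      rw [hq0, hb2, hphim1] at hsE
      omega
    have hnext : w (m2 + 1 + ν) = 0 ∨ w (m2 + 1 + ν) = 2 := by
      apply FIRST0 w hw
      rw [hEnd]
      exact hend
    by_cases hν0 : ν = 0
    · -- n = 1 essentially : w m2 = 0 followed by letter in {0,2}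
      rw [hν0, Nat.add_zero] at hnext
      obtain ⟨mm, _, hbr3⟩ := F0 w hw m2 hv2
      rcases hbr3 with ⟨_, hx, _⟩ | ⟨_, hx, _, _⟩ <;> omega
    · have hν1 : 1 ≤ ν := by omega
      have hνn : ν < n := by
        have := phi_le_add w (mi'+1) ν
        rw [hmν, hq0, hphim1] at this
        omega
      refine (IH ν hν1 hνn mi').2.2.2 ⟨?_, ?_, ?_⟩
      · intro j hj
        have := hsV j hj
        rw [show mi' + 1 + ν + 1 + j = m2 + 1 + j from by omega]
        exact this
      · rw [show mi' + 1 + ν = m2 from by omega]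
        exact hv2
      · rcases hmi'v with h | h
        · left; exact h
        · right
          refine ⟨h, ?_⟩
          rw [show mi' + 2*ν + 2 = m2 + 1 + ν from by omega]
          exact hnext
  · -- sub b : block 031 at (i+n-1, i+n, i+1+n)
    by_cases hn1 : n = 1
    · have : phi w m2 = i := by omega
      rw [this] at hr3
      omega
    have hq0 : phi w m2 = i + n - 1 := by omega
    by_cases hn2 : n = 2
    · -- mi'+1 = m2 : w mi' ∈ {0,2} followed by 2
      have hmm : mi' + 1 = m2 := by
        apply (phi_mono w).injective
        omega
      rcases hmi'v with h | h
      · obtain ⟨mm, _, hbr3⟩ := F0 w hw mi' h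
        rcases hbr3 with ⟨_, hx, _⟩ | ⟨_, hx, _, _⟩ <;> rw [hmm] at hx <;> omega
      · exact NO22 w hw mi' h (by rw [hmm]; exact hv2)
    · have hn3 : 3 ≤ n := by omega
      have hm1m : mi' + 1 ≤ m2 := by
        by_contra h
        have := (phi_mono w).monotone (show m2 ≤ mi' from by omega)
        omega
      set ν := m2 - (mi'+1) with hν
      have hmν : mi' + 1 + ν = m2 := by omega
      have hsync := SYNC w hw ν (mi'+1) (m2+1) (by
        intro k hk
        rw [hmν, hphim1, hq0] at hk
        rw [hphim1, hb2]
        have := hrep k (by omega)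
        exact this)
      rw [hmν] at hsync
      obtain ⟨hsV, hsE⟩ := hsync
      have hν1 : 1 ≤ ν := by
        rcases Nat.eq_zero_or_pos ν with h | h
        · exfalso
          have : mi' + 1 = m2 := by omega
          rw [this] at hphim1
          omega
        · omega
      have hνn : ν < n := by
        have := phi_le_add w (mi'+1) ν
        rw [hmν, hq0, hphim1] at this
        omega
      refine (IH ν hν1 hνn mi').2.1 ⟨?_, ?_, hmi'v⟩
      · intro j hj
        have := hsV j hj
        rw [show mi' + 1 + ν + 1 + j = m2 + 1 + j from by omega]
        exact this
      · rw [show mi' + 1 + ν = m2 from by omega]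
        exact hv2

lemma case0 (n : ℕ) (hn : 1 ≤ n)
    (IH : ∀ n', 1 ≤ n' → n' < n →
      ∀ i', ¬H3 w i' n' ∧ ¬H2 w i' n' ∧ ¬H1 w i' n' ∧ ¬H0 w i' n')
    (i : ℕ) (hrep : Rep w (i+1) n) (hc : w (i+1+n) = 0)
    (hctx : w i = 0 ∨ (w i = 2 ∧ (w (i+2*n+2) = 0 ∨ w (i+2*n+2) = 2))) : False := by
  have hwi1 : w (i+1) = w (i+1+n+1) := by
    have := hrep 0 (by omega)
    simpa using this
  obtain ⟨mc, hbc, hbr⟩ := F0 w hw (i+1+n) hc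
  rcases hbr with ⟨hvc, hx1, hxl⟩ | ⟨hvc, hx1, hx2, hxl⟩
  · -- sub a : central block 01 at (p, p+1)
    have hwi11 : w (i+1) = 1 := by rw [hwi1]; exact hx1
    rcases hctx with h0 | ⟨h2, hb2⟩
    · obtain ⟨mi, hbi, hbr1⟩ := F0 w hw i h0
      rcases hbr1 with ⟨hvi, hy1, hyl⟩ | ⟨_, hy1, _, _⟩
      · -- block 01 at (i, i+1), preimage letter 0
        have hphim1 : phi w (mi+1) = i + 2 := by omega
        by_cases hn1 : n = 1
        · -- mi+1 = mc
          have hmm : mi + 1 = mc := by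
            apply (phi_mono w).injective
            omega
          obtain ⟨mm, _, hbr3⟩ := F0 w hw mi hvi
          rcases hbr3 with ⟨_, hx, _⟩ | ⟨_, hx, _, _⟩ <;> rw [hmm] at hx <;> omega
        · have hm1m : mi + 1 ≤ mc := by
            by_contra h
            have := (phi_mono w).monotone (show mc ≤ mi from by omega)
            omega
          set ν := mc - (mi+1) with hν
          have hmν : mi + 1 + ν = mc := by omega
          have hsync := SYNC w hw ν (mi+1) (mc+1) (by
            intro k hk
            rw [hmν, hphim1, hbc] at hk
            rw [hphim1, hxl]
            have := hrep (k+1) (by omega)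
            rw [show i + 1 + (k+1) = i + 2 + k from by omega,
                show i + 1 + n + 1 + (k+1) = i + 1 + n + 2 + k from by omega] at this
            exact this)
          rw [hmν] at hsync
          obtain ⟨hsV, hsE⟩ := hsync
          have hν1 : 1 ≤ ν := by
            rcases Nat.eq_zero_or_pos ν with h | h
            · exfalso
              have : mi + 1 = mc := by omega
              rw [this] at hphim1
              omega
            · omega
          have hνn : ν < n := by
            have := phi_le_add w (mi+1) ν
            rw [hmν, hbc, hphim1] at this
            omega
          refine (IH ν hν1 hνn mi).2.2.2 ⟨?_, ?_, Or.inl hvi⟩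
          · intro j hj
            have := hsV j hj
            rw [show mi + 1 + ν + 1 + j = mc + 1 + j from by omega]
            exact this
          · rw [show mi + 1 + ν = mc from by omega]
            exact hvc
      · -- w (i+1) = 3 contradiction
        omega
    · -- w i = 2 : block [2] at i, so i+1 is block-initial with letter 1 : impossible
      obtain ⟨mi, hbi, hbl, hvmi⟩ := F2 w hw i h2
      have : w (phi w (mi+1)) = 1 := by rw [hbl]; exact hwi11
      exact FIRST w hw (mi+1) this
  · -- sub b : central block 031 at (p, p+1, p+2)
    have hwi13 : w (i+1) = 3 := by rw [hwi1]; exact hx1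
    rcases hctx with h0 | ⟨h2, hb2⟩
    · obtain ⟨mi, hbi, hbr1⟩ := F0 w hw i h0
      rcases hbr1 with ⟨_, hy1, _⟩ | ⟨hvi, hy1, hy2, hyl⟩
      · omega
      · -- block 031 at (i, i+1, i+2), preimage 2
        by_cases hn1 : n = 1
        · rw [show i + 1 + n = i + 2 from by omega] at hc; omega
        by_cases hn2 : n = 2
        · have hmm : mi + 1 = mc := by
            apply (phi_mono w).injective
            omega
          exact NO22 w hw mi hvi (by rw [hmm]; exact hvc)
        · have hn3 : 3 ≤ n := by omega
          have hphim1 : phi w (mi+1) = i + 3 := by omega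
          have hm1m : mi + 1 ≤ mc := by
            by_contra h
            have := (phi_mono w).monotone (show mc ≤ mi from by omega)
            omega
          set ν := mc - (mi+1) with hν
          have hmν : mi + 1 + ν = mc := by omega
          have hsync := SYNC w hw ν (mi+1) (mc+1) (by
            intro k hk
            rw [hmν, hphim1, hbc] at hk
            rw [hphim1, hxl]
            have := hrep (k+2) (by omega)
            rw [show i + 1 + (k+2) = i + 3 + k from by omega,
                show i + 1 + n + 1 + (k+2) = i + 1 + n + 3 + k from by omega] at this
            exact this)
          rw [hmν] at hsync
          obtain ⟨hsV, hsE⟩ := hsync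
          have hν1 : 1 ≤ ν := by
            rcases Nat.eq_zero_or_pos ν with h | h
            · exfalso
              have : mi + 1 = mc := by omega
              rw [this] at hphim1
              omega
            · omega
          have hνn : ν < n := by
            have := phi_le_add w (mi+1) ν
            rw [hmν, hbc, hphim1] at this
            omega
          refine (IH ν hν1 hνn mi).2.1 ⟨?_, ?_, Or.inr hvi⟩
          · intro j hj
            have := hsV j hj
            rw [show mi + 1 + ν + 1 + j = mc + 1 + j from by omega]
            exact this
          · rw [show mi + 1 + ν = mc from by omega]
            exact hvc
    · -- w i = 2
      obtain ⟨mi, hbi, hbl, hvmi⟩ := F2 w hw i h2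
      -- block at i+1 starts with 3, so it is [3]
      rcases MASTER w hw (mi+1) with ⟨_, _, d0, _⟩ | ⟨_, _, d0⟩ | ⟨_, _, d0, _, _⟩ | ⟨_, hl2, d0⟩ <;>
        rw [hbl] at *
      · omega
      · omega
      · omega
      · -- phi (mi+2) = i+2
        have hne1 : w (i+1+1) ≠ 1 := by
          rw [← hl2]; exact FIRST w hw (mi+1+1)
        by_cases hn1 : n = 1
        · -- w (i+2n+2) = w (p+2) = 1, contradiction with hb2
          rw [show i + 2*n + 2 = i + 1 + n + 2 from by omega] at hb2
          omega
        · have := hrep 1 (by omega)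
          rw [show i + 1 + 1 = i + 2 from by omega] at this hne1
          rw [show i + 1 + n + 1 + 1 = i + 1 + n + 2 from by omega] at this
          omega

theorem MAIN : ∀ n, 1 ≤ n → ∀ i,
    ¬H3 w i n ∧ ¬H2 w i n ∧ ¬H1 w i n ∧ ¬H0 w i n := by
  intro n
  induction n using Nat.strong_induction_on with
  | _ n IH =>
  intro hn i
  have IH' : ∀ n', 1 ≤ n' → n' < n →
      ∀ i', ¬H3 w i' n' ∧ ¬H2 w i' n' ∧ ¬H1 w i' n' ∧ ¬H0 w i' n' :=
    fun n' h1 h2 i' => IH n' h2 h1 i'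
  exact ⟨fun h => case3 w hw n hn IH' i h.1 h.2,
         fun h => case2 w hw n hn IH' i h.1 h.2.1 h.2.2,
         fun h => case1 w hw n hn IH' i h.1 h.2.1 h.2.2,
         fun h => case0 w hw n hn IH' i h.1 h.2.1 h.2.2⟩

end W
end X3X

/-- g^ω(0) avoids the pattern with constants x3x. -/
theorem g_fixed_point_avoids_x3x (w : ℕ → ℕ) (hw : IsFixedPointG w) :
    ∀ U : List ℕ, U ≠ [] → ¬ IsFactorOf (U ++ [3] ++ U) w := by
  intro U hU hfac
  obtain ⟨i, hfac⟩ := hfac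
  set n := U.length with hn'
  have hn : 1 ≤ n := List.length_pos_iff.mpr hU
  have hL : (U ++ [3] ++ U).length = n + 1 + n := by
    simp only [List.length_append, List.length_cons, List.length_nil] <;> omega
  have hj' : ∀ j, j < n + 1 + n → (U ++ [3] ++ U)[j]? = some (w (i+j)) := by
    intro j hj
    conv_lhs => rw [hfac]
    rw [List.getElem?_map, List.getElem?_range (by rw [hL]; exact hj)]
    rfl
  have hcenter : w (i + n) = 3 := by
    have h1 := hj' n (by omega)
    rw [List.getElem?_append_left
          (by simp only [List.length_append, List.length_cons, List.length_nil]; omega),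
        List.getElem?_append_right (by omega : U.length ≤ n)] at h1
    rw [(by omega : n - U.length = 0)] at h1
    simp only [List.getElem?_cons_zero, Option.some.injEq] at h1
    omega
  have hRep : X3X.Rep w i n := by
    intro k hk
    have h1 := hj' k (by omega)
    have h2 := hj' (n+1+k) (by omega)
    rw [List.getElem?_append_left
          (by simp only [List.length_append, List.length_cons, List.length_nil]; omega),
        List.getElem?_append_left (by omega : k < U.length)] at h1
    rw [List.getElem?_append_right
          (by simp only [List.length_append, List.length_cons, List.length_nil]; omega)] at h2
    have he : n + 1 + k - (U ++ [3]).length = k := by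
      simp only [List.length_append, List.length_cons, List.length_nil]
      omega
    rw [he] at h2
    rw [show i + n + 1 + k = i + (n+1+k) from by omega]
    have := h1.symm.trans h2
    simpa using this
  exact (X3X.MAIN w hw n hn i).1 ⟨hRep, hcenter⟩
end
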